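/- arXiv:1511.02334 — 5 statements merged into one kernel-verified Lean document; each statement's English description precedes it below -/
import Mathlib

section
/- A unit div point set (P,Ω) with |P| ≥ 4 satisfies laws (U1), (U2), (U3) if and only if for every 4-element subset R of P, the 6-element set {D ∈ Ω : ξ(D) = R} of unit dividons is isomorphic either to the dividon set of Conc₄¹ or to the dividon set of Conv₄ (core of Lemma 3). -/
open Finset

/-- A (unit) dividon: an ordered pair of a divider and a set of divs. -/
abbrev Dividon : Type := Finset ℕ × Finset (Finset ℕ)

/-- A candidate (unit) div point set: a pair of a point set and a set of dividons. -/
abbrev PreDPS : Type := Finset ℕ × Finset Dividon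

/-- The union `⋃δ` of a set of divs. -/
def unionOf (δ : Finset (Finset ℕ)) : Finset ℕ := δ.sup id

/-- `ξ(D) = π₁(D) ∪ ⋃π₂(D)`. -/
def xi (D : Dividon) : Finset ℕ := D.1 ∪ unionOf D.2

/-- `D = (d, δ)` is a dividon over the point set `P`. -/
def IsDividon (P : Finset ℕ) (D : Dividon) : Prop :=
  D.1.card = 2 ∧ D.1 ⊆ P ∧
    ∃ A B : Finset ℕ, A ≠ B ∧ D.2 = {A, B} ∧ A ∪ B = P \ D.1 ∧ A ∩ B = ∅

/-- `X` is a div point set. -/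
def IsDPS (X : PreDPS) : Prop :=
  X.1.Nonempty ∧ X.2.card = Nat.choose X.1.card 2 ∧
    (∀ D ∈ X.2, IsDividon X.1 D) ∧
    ∀ D₁ ∈ X.2, ∀ D₂ ∈ X.2, D₁.1 = D₂.1 → D₁ = D₂

/-- `φ(δ,T) = 1` if the two TBD points of `T` lie in the same div of `δ`,
`φ(δ,T) = 0` otherwise. -/
def phi (δ : Finset (Finset ℕ)) (T : Finset ℕ) : ℕ :=
  if ∃ dv ∈ δ, (T ∩ dv).card = 2 then 1 else 0

/-- `ψ(δ) = 1` if some div of `δ` has two elements, `ψ(δ) = 0` otherwise. -/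
def psi (δ : Finset (Finset ℕ)) : ℕ :=
  if ∃ dv ∈ δ, dv.card = 2 then 1 else 0

/-- Laws (L1), (L2), (L3) for div point sets. -/
def LawsDPS (X : PreDPS) : Prop :=
  (∀ R ⊆ X.1, R.card = 4 →
    ∀ D₁ ∈ X.2, ∀ D₂ ∈ X.2, ∀ D₃ ∈ X.2,
      D₁.1 ∪ D₂.1 ∪ D₃.1 = R → (D₁.1 ∩ D₂.1 ∩ D₃.1).card = 1 →
      (phi D₁.2 (R \ D₁.1) = 0 ↔ phi D₂.2 (R \ D₂.1) = phi D₃.2 (R \ D₃.1))) ∧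
  (∀ R ⊆ X.1, R.card = 4 →
    ∀ D₁ ∈ X.2, ∀ D₂ ∈ X.2, ∀ D₃ ∈ X.2,
      D₁.1 ∪ D₂.1 ∪ D₃.1 = R → (D₁.1 ∩ D₂.1 ∩ D₃.1).card = 1 →
      (phi D₁.2 (R \ D₁.1) = 1 ↔ phi D₂.2 (R \ D₂.1) ≠ phi D₃.2 (R \ D₃.1))) ∧
  (∀ R ⊆ X.1, R.card = 4 →
    ∀ D₁ ∈ X.2, ∀ D₂ ∈ X.2, ∀ D₃ ∈ X.2,
      D₁ ≠ D₂ → D₁ ≠ D₃ → D₂ ≠ D₃ →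
      D₁.1 ∪ D₂.1 ∪ D₃.1 ⊆ R → (D₁.1 ∪ D₂.1 ∪ D₃.1).card = 3 →
      phi D₁.2 (R \ D₁.1) = 0 → phi D₂.2 (R \ D₂.1) = 0 →
      phi D₃.2 (R \ D₃.1) = 1)

/-- The class DPS⁺: div point sets satisfying (L1), (L2), (L3). -/
def DPSplus (X : PreDPS) : Prop := IsDPS X ∧ LawsDPS X

/-- `D = (d, δ)` is a unit dividon over the point set `P`. -/
def IsUnitDividon (P : Finset ℕ) (D : Dividon) : Prop :=
  D.1.card = 2 ∧ D.1 ⊆ P ∧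
    ∃ A B : Finset ℕ, A ≠ B ∧ D.2 = {A, B} ∧ (A ∪ B).card = 2 ∧
      A ∪ B ⊆ P \ D.1 ∧ A ∩ B = ∅

/-- `U` is a unit div point set. -/
def IsUDPS (U : PreDPS) : Prop :=
  U.1.Nonempty ∧
    U.2.card = Nat.choose U.1.card 2 * Nat.choose (U.1.card - 2) 2 ∧
    (∀ D ∈ U.2, IsUnitDividon U.1 D) ∧
    ∀ D₁ ∈ U.2, ∀ D₂ ∈ U.2,
      D₁.1 = D₂.1 → unionOf D₁.2 = unionOf D₂.2 → D₁ = D₂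

/-- Laws (U1), (U2), (U3) for unit div point sets. -/
def LawsUDPS (U : PreDPS) : Prop :=
  (∀ R ⊆ U.1, R.card = 4 →
    ∀ D₁ ∈ U.2, ∀ D₂ ∈ U.2, ∀ D₃ ∈ U.2,
      D₁ ≠ D₂ → D₁ ≠ D₃ → D₂ ≠ D₃ →
      xi D₁ = R → xi D₂ = R → xi D₃ = R →
      (D₁.1 ∩ D₂.1 ∩ D₃.1).card = 1 →
      (psi D₁.2 = 0 ↔ psi D₂.2 = psi D₃.2)) ∧
  (∀ R ⊆ U.1, R.card = 4 →
    ∀ D₁ ∈ U.2, ∀ D₂ ∈ U.2, ∀ D₃ ∈ U.2,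
      D₁ ≠ D₂ → D₁ ≠ D₃ → D₂ ≠ D₃ →
      xi D₁ = R → xi D₂ = R → xi D₃ = R →
      (D₁.1 ∩ D₂.1 ∩ D₃.1).card = 1 →
      (psi D₁.2 = 1 ↔ psi D₂.2 ≠ psi D₃.2)) ∧
  (∀ R ⊆ U.1, R.card = 4 →
    ∀ D₁ ∈ U.2, ∀ D₂ ∈ U.2, ∀ D₃ ∈ U.2,
      D₁ ≠ D₂ → D₁ ≠ D₃ → D₂ ≠ D₃ →
      xi D₁ = R → xi D₂ = R → xi D₃ = R →
      (D₁.1 ∪ D₂.1 ∪ D₃.1).card = 3 →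
      psi D₁.2 = 0 → psi D₂.2 = 0 → psi D₃.2 = 1)

/-- The class UDPS⁺: unit div point sets satisfying (U1), (U2), (U3). -/
def UDPSplus (U : PreDPS) : Prop := IsUDPS U ∧ LawsUDPS U

/-- `F_udps`: breaks every dividon of a div point set into unit dividons,
one for each 2-element subset `T = {a,b}` of the TBD points: the unit dividon is
`(d, {{a,b},∅})` if `a` and `b` lie in the same div, and `(d, {{a},{b}})` otherwise. -/
def Fudps (X : PreDPS) : PreDPS :=
  (X.1, X.2.biUnion fun D =>
    ((X.1 \ D.1).powersetCard 2).image fun T =>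
      (D.1, if ∃ dv ∈ D.2, T ⊆ dv then ({T, ∅} : Finset (Finset ℕ))
            else T.image fun a => ({a} : Finset ℕ)))

/-- `Y` is the sub div point set of `X` on the point set `Ps` (where `4 ≤ |Ps|`):
the unique div point set with point set `Ps` whose image under `F_udps` has exactly
the unit dividons `D` of `F_udps X` with `ξ(D) ⊆ Ps`. -/
def IsSdps (X : PreDPS) (Ps : Finset ℕ) (Y : PreDPS) : Prop :=
  Ps ⊆ X.1 ∧ 4 ≤ Ps.card ∧ IsDPS Y ∧ Y.1 = Ps ∧
    (Fudps Y).2 = (Fudps X).2.filter fun D => xi D ⊆ Ps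

/-- Isomorphism of (candidate) div point sets. -/
def Isom (X Y : PreDPS) : Prop :=
  ∃ f : ℕ → ℕ, Set.BijOn f ↑X.1 ↑Y.1 ∧
    ∀ D ∈ X.2, (D.1.image f, D.2.image (Finset.image f)) ∈ Y.2

/-- Isomorphism of sets of (unit) dividons. -/
def OmegaIsom (Ω₁ Ω₂ : Finset Dividon) : Prop :=
  Ω₁.card = Ω₂.card ∧
    ∃ f : ℕ → ℕ, Set.BijOn f ↑(Ω₁.sup xi) ↑(Ω₂.sup xi) ∧
      ∀ D ∈ Ω₁, (D.1.image f, D.2.image (Finset.image f)) ∈ Ω₂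

/-- The div point set Conc₄¹. -/
def Conc41 : PreDPS :=
  ({1, 2, 3, 4},
   {({1, 2}, {{3}, {4}}), ({1, 3}, {{2}, {4}}), ({1, 4}, {{2}, {3}}),
    ({2, 3}, {{1, 4}, ∅}), ({2, 4}, {{1, 3}, ∅}), ({3, 4}, {{1, 2}, ∅})})

/-- The div point set Conv₄. -/
def Conv4 : PreDPS :=
  ({1, 2, 3, 4},
   {({1, 2}, {{3, 4}, ∅}), ({1, 3}, {{2}, {4}}), ({1, 4}, {{2, 3}, ∅}),
    ({2, 3}, {{1, 4}, ∅}), ({2, 4}, {{1}, {3}}), ({3, 4}, {{1, 2}, ∅})})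

/-- The div point set Conv_n on `{1, …, n}`: the dividon with divider `d = {i,j}`,
`i < j`, has divs `{p : i < p < j}` and `{p : p < i or p > j}`. -/
def ConvN (n : ℕ) : PreDPS :=
  (Finset.Icc 1 n,
   ((Finset.Icc 1 n).powersetCard 2).image fun d =>
     (d, ({(Finset.Icc 1 n).filter fun p => (∃ i ∈ d, i < p) ∧ ∃ j ∈ d, p < j,
           (Finset.Icc 1 n).filter fun p =>
             (∀ i ∈ d, p < i) ∨ ∀ i ∈ d, i < p} : Finset (Finset ℕ))))

section Helpers

lemma unionOf_pair (A B : Finset ℕ) : unionOf {A, B} = A ∪ B := by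
  simp [unionOf]

lemma psi_singletons (z w : ℕ) : psi {({z} : Finset ℕ), {w}} = 0 := by
  simp [psi]

lemma psi_merged {z w : ℕ} (h : z ≠ w) : psi {({z, w} : Finset ℕ), ∅} = 1 := by
  simp only [psi]
  rw [if_pos ⟨{z, w}, by simp, Finset.card_pair h⟩]

lemma subset_pair {A : Finset ℕ} {z w : ℕ} (h : A ⊆ {z, w}) :
    A = ∅ ∨ A = {z} ∨ A = {w} ∨ A = {z, w} := by
  by_cases hz : z ∈ A <;> by_cases hw : w ∈ A
  · right; right; right
    exact Finset.Subset.antisymm h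
      (by intro x hx; simp at hx; rcases hx with rfl | rfl <;> assumption)
  · right; left
    apply Finset.Subset.antisymm
    · intro x hx; have := h hx; simp only [Finset.mem_insert, Finset.mem_singleton] at this ⊢
      rcases this with rfl | rfl
      · rfl
      · exact absurd hx hw
    · simpa using hz
  · right; right; left
    apply Finset.Subset.antisymm
    · intro x hx; have := h hx; simp only [Finset.mem_insert, Finset.mem_singleton] at this ⊢
      rcases this with rfl | rfl
      · exact absurd hx hz
      · rfl
    · simpa using hw
  · left
    ext x; simp only [Finset.notMem_empty, iff_false]
    intro hx; have := h hx; simp only [Finset.mem_insert, Finset.mem_singleton] at this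
    rcases this with rfl | rfl
    · exact absurd hx hz
    · exact absurd hx hw

lemma card_eq_four' {R : Finset ℕ} (h : R.card = 4) :
    ∃ p q r s : ℕ, p ≠ q ∧ p ≠ r ∧ p ≠ s ∧ q ≠ r ∧ q ≠ s ∧ r ≠ s ∧ R = {p, q, r, s} := by
  obtain ⟨p, t, hp, ht, hc⟩ := Finset.card_eq_succ.1 (by omega : R.card = 3 + 1)
  obtain ⟨q, r, s, hqr, hqs, hrs, rfl⟩ := Finset.card_eq_three.1 hc
  simp only [Finset.mem_insert, Finset.mem_singleton, not_or] at hp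
  exact ⟨p, q, r, s, hp.1, hp.2.1, hp.2.2, hqr, hqs, hrs, ht.symm⟩

lemma pair_cases {d : Finset ℕ} {p q r s : ℕ} (hd : d ⊆ {p, q, r, s}) (hc : d.card = 2) :
    d = {p, q} ∨ d = {p, r} ∨ d = {p, s} ∨ d = {q, r} ∨ d = {q, s} ∨ d = {r, s} := by
  obtain ⟨a, b, hab, rfl⟩ := Finset.card_eq_two.1 hc
  have ha : a ∈ ({p, q, r, s} : Finset ℕ) := hd (by simp)
  have hb : b ∈ ({p, q, r, s} : Finset ℕ) := hd (by simp)
  simp only [Finset.mem_insert, Finset.mem_singleton] at ha hb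
  rcases ha with rfl | rfl | rfl | rfl <;> rcases hb with rfl | rfl | rfl | rfl <;>
    simp_all [Finset.pair_comm]

lemma ne_pair {a b c d : ℕ} (h1 : d ≠ a) (h2 : d ≠ b) : ({a, b} : Finset ℕ) ≠ {c, d} := by
  intro he
  have : d ∈ ({a, b} : Finset ℕ) := he ▸ (by simp)
  simp only [Finset.mem_insert, Finset.mem_singleton] at this
  tauto

end Helpers
section Struct

lemma udps_unionOf_eq {U : PreDPS} (hU : IsUDPS U) {D : Dividon} (hD : D ∈ U.2) :
    unionOf D.2 ⊆ U.1 \ D.1 ∧ (unionOf D.2).card = 2 ∧ D.1.card = 2 ∧ D.1 ⊆ U.1 := by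
  obtain ⟨hc2, hsubP, A, B, hAB, hδ, hABc, hABsub, hABint⟩ := hU.2.2.1 D hD
  rw [hδ, unionOf_pair]
  exact ⟨hABsub, hABc, hc2, hsubP⟩

lemma udps_xi_sdiff {U : PreDPS} (hU : IsUDPS U) {D : Dividon} (hD : D ∈ U.2) :
    unionOf D.2 = xi D \ D.1 := by
  obtain ⟨hsub, -, -, -⟩ := udps_unionOf_eq hU hD
  have hdisj : Disjoint D.1 (unionOf D.2) :=
    (Finset.disjoint_sdiff.mono_left (le_refl _)).mono_right hsub |>.symm.symm
  rw [xi, Finset.union_sdiff_cancel_left]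
  exact Finset.disjoint_left.2 fun a ha hb => (Finset.mem_sdiff.1 (hsub hb)).2 ha

lemma udps_unique {U : PreDPS} (hU : IsUDPS U) {D1 D2 : Dividon} (h1 : D1 ∈ U.2)
    (h2 : D2 ∈ U.2) (hd : D1.1 = D2.1) (hx : xi D1 = xi D2) : D1 = D2 := by
  apply hU.2.2.2 D1 h1 D2 h2 hd
  rw [udps_xi_sdiff hU h1, udps_xi_sdiff hU h2, hd, hx]

lemma udps_exists {U : PreDPS} (hU : IsUDPS U) {d T : Finset ℕ}
    (hd : d ⊆ U.1) (hT : T ⊆ U.1 \ d) (hdc : d.card = 2) (hTc : T.card = 2) :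
    ∃ D ∈ U.2, D.1 = d ∧ unionOf D.2 = T := by
  classical
  set g : Dividon → Finset ℕ × Finset ℕ := fun D => (D.1, unionOf D.2) with hg
  set S : Finset (Finset ℕ × Finset ℕ) :=
    (U.1.powersetCard 2).biUnion
      (fun e => ((U.1 \ e).powersetCard 2).image fun T' => (e, T')) with hS
  have hinj : Set.InjOn g ↑U.2 := by
    intro D1 h1 D2 h2 hEq
    rw [hg] at hEq
    simp only [Prod.mk.injEq] at hEq
    exact hU.2.2.2 D1 h1 D2 h2 hEq.1 hEq.2
  have hsub : U.2.image g ⊆ S := by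
    intro x hx
    simp only [Finset.mem_image] at hx
    obtain ⟨D, hD, rfl⟩ := hx
    obtain ⟨hABsub, hABc, hc2, hsubP⟩ := udps_unionOf_eq hU hD
    rw [hS]
    apply Finset.mem_biUnion.2
    exact ⟨D.1, Finset.mem_powersetCard.2 ⟨hsubP, hc2⟩,
      Finset.mem_image.2 ⟨unionOf D.2, Finset.mem_powersetCard.2 ⟨hABsub, hABc⟩, rfl⟩⟩
  have hScard : S.card = Nat.choose U.1.card 2 * Nat.choose (U.1.card - 2) 2 := by
    rw [hS, Finset.card_biUnion]
    · have : ∀ e ∈ U.1.powersetCard 2,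
          (((U.1 \ e).powersetCard 2).image fun T' => (e, T')).card
            = Nat.choose (U.1.card - 2) 2 := by
        intro e he
        obtain ⟨hesub, hec⟩ := Finset.mem_powersetCard.1 he
        rw [Finset.card_image_of_injective _ (fun a b hab => by
          simpa using congrArg Prod.snd hab),
          Finset.card_powersetCard, Finset.card_sdiff_of_subset hesub, hec]
      rw [Finset.sum_congr rfl this, Finset.sum_const, Finset.card_powersetCard, smul_eq_mul]
    · intro e1 h1 e2 h2 hne
      rw [Function.onFun, Finset.disjoint_left]
      intro x hx1 hx2
      simp only [Finset.mem_image] at hx1 hx2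
      obtain ⟨T1, -, rfl⟩ := hx1
      obtain ⟨T2, -, h⟩ := hx2
      exact hne (by simpa using congrArg Prod.fst h.symm)
  have himg : U.2.image g = S := by
    apply Finset.eq_of_subset_of_card_le hsub
    rw [hScard, Finset.card_image_of_injOn hinj, hU.2.1]
  have hmemS : (d, T) ∈ S := by
    rw [hS]
    exact Finset.mem_biUnion.2 ⟨d, Finset.mem_powersetCard.2 ⟨hd, hdc⟩,
      Finset.mem_image.2 ⟨T, Finset.mem_powersetCard.2 ⟨hT, hTc⟩, rfl⟩⟩
  rw [← himg] at hmemS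
  obtain ⟨D, hD, hgD⟩ := Finset.mem_image.1 hmemS
  rw [hg] at hgD
  simp only [Prod.mk.injEq] at hgD
  exact ⟨D, hD, hgD.1, hgD.2⟩

lemma udps_shape {U : PreDPS} (hU : IsUDPS U) {D : Dividon} (hD : D ∈ U.2) {z w : ℕ}
    (hzw : z ≠ w) (hu : unionOf D.2 = {z, w}) :
    D.2 = {{z, w}, ∅} ∨ D.2 = {{z}, {w}} := by
  obtain ⟨hc2, hsubP, A, B, hAB, hδ, hABc, hABsub, hABint⟩ := hU.2.2.1 D hD
  have hABu : A ∪ B = ({z, w} : Finset ℕ) := by rw [← hu, hδ, unionOf_pair]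
  have hdisj : Disjoint A B := Finset.disjoint_iff_inter_eq_empty.2 hABint
  have hB : B = ({z, w} : Finset ℕ) \ A := by
    rw [← hABu, Finset.union_sdiff_cancel_left hdisj]
  rcases subset_pair (hABu ▸ Finset.subset_union_left : A ⊆ ({z, w} : Finset ℕ)) with
    rfl | rfl | rfl | rfl
  · left; rw [hδ, hB, Finset.sdiff_empty, Finset.pair_comm]
  · right
    have : B = ({w} : Finset ℕ) := by rw [hB]; ext x; simp; omega
    rw [hδ, this]
  · right
    have : B = ({z} : Finset ℕ) := by rw [hB]; ext x; simp; omega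
    rw [hδ, this, Finset.pair_comm]
  · left
    have : B = (∅ : Finset ℕ) := by rw [hB, Finset.sdiff_self]
    rw [hδ, this]

end Struct
section Models

lemma conc_card : Conc41.2.card = 6 := by decide

lemma conv_card : Conv4.2.card = 6 := by decide

lemma conc_sup : Conc41.2.sup xi = {1, 2, 3, 4} := by decide

lemma conv_sup : Conv4.2.sup xi = {1, 2, 3, 4} := by decide

lemma conc_u1 : ∀ E1 ∈ Conc41.2, ∀ E2 ∈ Conc41.2, ∀ E3 ∈ Conc41.2,
    E1 ≠ E2 ∧ E1 ≠ E3 ∧ E2 ≠ E3 ∧ (E1.1 ∩ E2.1 ∩ E3.1).card = 1 →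
    (psi E1.2 = 0 ↔ psi E2.2 = psi E3.2) := by decide

lemma conv_u1 : ∀ E1 ∈ Conv4.2, ∀ E2 ∈ Conv4.2, ∀ E3 ∈ Conv4.2,
    E1 ≠ E2 ∧ E1 ≠ E3 ∧ E2 ≠ E3 ∧ (E1.1 ∩ E2.1 ∩ E3.1).card = 1 →
    (psi E1.2 = 0 ↔ psi E2.2 = psi E3.2) := by decide

lemma conc_u2 : ∀ E1 ∈ Conc41.2, ∀ E2 ∈ Conc41.2, ∀ E3 ∈ Conc41.2,
    E1 ≠ E2 ∧ E1 ≠ E3 ∧ E2 ≠ E3 ∧ (E1.1 ∩ E2.1 ∩ E3.1).card = 1 →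
    (psi E1.2 = 1 ↔ psi E2.2 ≠ psi E3.2) := by decide

lemma conv_u2 : ∀ E1 ∈ Conv4.2, ∀ E2 ∈ Conv4.2, ∀ E3 ∈ Conv4.2,
    E1 ≠ E2 ∧ E1 ≠ E3 ∧ E2 ≠ E3 ∧ (E1.1 ∩ E2.1 ∩ E3.1).card = 1 →
    (psi E1.2 = 1 ↔ psi E2.2 ≠ psi E3.2) := by decide

lemma conc_u3 : ∀ E1 ∈ Conc41.2, ∀ E2 ∈ Conc41.2, ∀ E3 ∈ Conc41.2,
    E1 ≠ E2 ∧ E1 ≠ E3 ∧ E2 ≠ E3 ∧ (E1.1 ∪ E2.1 ∪ E3.1).card = 3 ∧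
      psi E1.2 = 0 ∧ psi E2.2 = 0 → psi E3.2 = 1 := by decide

lemma conv_u3 : ∀ E1 ∈ Conv4.2, ∀ E2 ∈ Conv4.2, ∀ E3 ∈ Conv4.2,
    E1 ≠ E2 ∧ E1 ≠ E3 ∧ E2 ≠ E3 ∧ (E1.1 ∪ E2.1 ∪ E3.1).card = 3 ∧
      psi E1.2 = 0 ∧ psi E2.2 = 0 → psi E3.2 = 1 := by decide

end Models

section ToModel

variable {a b c d : ℕ}

/-- The standard relabeling map. -/
def stdMap (a b c d : ℕ) : ℕ → ℕ := fun x =>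
  if x = a then 1 else if x = b then 2 else if x = c then 3 else 4

lemma stdMap_bijOn (hab : a ≠ b) (hac : a ≠ c) (had : a ≠ d) (hbc : b ≠ c)
    (hbd : b ≠ d) (hcd : c ≠ d) :
    Set.BijOn (stdMap a b c d) ↑({a, b, c, d} : Finset ℕ) ↑({1, 2, 3, 4} : Finset ℕ) := by
  have fa : stdMap a b c d a = 1 := by simp [stdMap]
  have fb : stdMap a b c d b = 2 := by simp [stdMap, Ne.symm hab]
  have fc : stdMap a b c d c = 3 := by simp [stdMap, Ne.symm hac, Ne.symm hbc]
  have fd : stdMap a b c d d = 4 := by simp [stdMap, Ne.symm had, Ne.symm hbd, Ne.symm hcd]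
  refine ⟨?_, ?_, ?_⟩
  · intro x hx
    simp only [Finset.coe_insert, Set.mem_insert_iff, Finset.coe_singleton,
      Set.mem_singleton_iff] at hx ⊢
    rcases hx with rfl | rfl | rfl | rfl <;> simp [fa, fb, fc, fd]
  · intro x hx y hy hxy
    simp only [Finset.coe_insert, Set.mem_insert_iff, Finset.coe_singleton,
      Set.mem_singleton_iff] at hx hy
    rcases hx with rfl | rfl | rfl | rfl <;> rcases hy with rfl | rfl | rfl | rfl <;>
      simp_all [fa, fb, fc, fd]
  · intro y hy
    simp only [Finset.coe_insert, Set.mem_insert_iff, Finset.coe_singleton,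
      Set.mem_singleton_iff] at hy
    rcases hy with rfl | rfl | rfl | rfl
    · exact ⟨a, by simp, fa⟩
    · exact ⟨b, by simp, fb⟩
    · exact ⟨c, by simp, fc⟩
    · exact ⟨d, by simp, fd⟩

lemma toConc (hab : a ≠ b) (hac : a ≠ c) (had : a ≠ d) (hbc : b ≠ c)
    (hbd : b ≠ d) (hcd : c ≠ d) {Ω : Finset Dividon} (hcard : Ω.card = 6)
    (hsup : Ω.sup xi = {a, b, c, d})
    (hmem : ∀ D ∈ Ω,
      D = ({a,b}, ({{c},{d}} : Finset (Finset ℕ))) ∨ D = ({a,c}, {{b},{d}}) ∨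
      D = ({a,d}, {{b},{c}}) ∨ D = ({b,c}, {{a,d},∅}) ∨ D = ({b,d}, {{a,c},∅}) ∨
      D = ({c,d}, {{a,b},∅})) :
    OmegaIsom Ω Conc41.2 := by
  have fa : stdMap a b c d a = 1 := by simp [stdMap]
  have fb : stdMap a b c d b = 2 := by simp [stdMap, Ne.symm hab]
  have fc : stdMap a b c d c = 3 := by simp [stdMap, Ne.symm hac, Ne.symm hbc]
  have fd : stdMap a b c d d = 4 := by simp [stdMap, Ne.symm had, Ne.symm hbd, Ne.symm hcd]
  refine ⟨by rw [hcard, conc_card], stdMap a b c d, ?_, ?_⟩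
  · rw [hsup, conc_sup]
    exact stdMap_bijOn hab hac had hbc hbd hcd
  · intro D hD
    rcases hmem D hD with rfl | rfl | rfl | rfl | rfl | rfl <;>
      simp [fa, fb, fc, fd, Conc41, Finset.image_insert]

lemma toConv (hab : a ≠ b) (hac : a ≠ c) (had : a ≠ d) (hbc : b ≠ c)
    (hbd : b ≠ d) (hcd : c ≠ d) {Ω : Finset Dividon} (hcard : Ω.card = 6)
    (hsup : Ω.sup xi = {a, b, c, d})
    (hmem : ∀ D ∈ Ω,
      D = ({a,b}, ({{c,d},∅} : Finset (Finset ℕ))) ∨ D = ({a,c}, {{b},{d}}) ∨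
      D = ({a,d}, {{b,c},∅}) ∨ D = ({b,c}, {{a,d},∅}) ∨ D = ({b,d}, {{a},{c}}) ∨
      D = ({c,d}, {{a,b},∅})) :
    OmegaIsom Ω Conv4.2 := by
  have fa : stdMap a b c d a = 1 := by simp [stdMap]
  have fb : stdMap a b c d b = 2 := by simp [stdMap, Ne.symm hab]
  have fc : stdMap a b c d c = 3 := by simp [stdMap, Ne.symm hac, Ne.symm hbc]
  have fd : stdMap a b c d d = 4 := by simp [stdMap, Ne.symm had, Ne.symm hbd, Ne.symm hcd]
  refine ⟨by rw [hcard, conv_card], stdMap a b c d, ?_, ?_⟩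
  · rw [hsup, conv_sup]
    exact stdMap_bijOn hab hac had hbc hbd hcd
  · intro D hD
    rcases hmem D hD with rfl | rfl | rfl | rfl | rfl | rfl <;>
      simp [fa, fb, fc, fd, Conv4, Finset.image_insert]

end ToModel
section PerR

lemma omegaR_sup {U : PreDPS} {R : Finset ℕ}
    (hne : (U.2.filter fun D => xi D = R).Nonempty) :
    (U.2.filter fun D => xi D = R).sup xi = R := by
  rw [Finset.sup_congr rfl (fun D hD => (Finset.mem_filter.1 hD).2), Finset.sup_const hne]

lemma omegaR_card {U : PreDPS} (hU : IsUDPS U) {R : Finset ℕ} (hR : R ⊆ U.1)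
    (hc : R.card = 4) : (U.2.filter fun D => xi D = R).card = 6 := by
  classical
  have hinj : Set.InjOn (Prod.fst : Dividon → Finset ℕ) ↑(U.2.filter fun D => xi D = R) := by
    intro D1 h1 D2 h2 h
    rw [Finset.mem_coe, Finset.mem_filter] at h1 h2
    exact udps_unique hU h1.1 h2.1 h (h1.2.trans h2.2.symm)
  have himg : (U.2.filter fun D => xi D = R).image Prod.fst = R.powersetCard 2 := by
    apply Finset.Subset.antisymm
    · intro x hx
      obtain ⟨D, hD, rfl⟩ := Finset.mem_image.1 hx
      obtain ⟨hDU, hxi⟩ := Finset.mem_filter.1 hD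
      obtain ⟨-, -, hc2, -⟩ := udps_unionOf_eq hU hDU
      refine Finset.mem_powersetCard.2 ⟨?_, hc2⟩
      rw [← hxi, xi]; exact Finset.subset_union_left
    · intro dd hdd
      obtain ⟨hsub, hc2⟩ := Finset.mem_powersetCard.1 hdd
      obtain ⟨D, hD, hD1, hDu⟩ := udps_exists hU (hsub.trans hR)
        (Finset.sdiff_subset_sdiff hR (le_refl _) : R \ dd ⊆ U.1 \ dd)
        hc2 (by rw [Finset.card_sdiff_of_subset hsub, hc, hc2])
      refine Finset.mem_image.2 ⟨D, Finset.mem_filter.2 ⟨hD, ?_⟩, hD1⟩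
      rw [xi, hD1, hDu, Finset.union_sdiff_of_subset hsub]
  have := Finset.card_image_of_injOn hinj
  rw [himg, Finset.card_powersetCard, hc] at this
  exact this.symm

lemma get_dividon {U : PreDPS} (hU : IsUDPS U) {R : Finset ℕ} (hR : R ⊆ U.1)
    {x y z w : ℕ} (hxy : x ≠ y) (hxz : x ≠ z) (hxw : x ≠ w) (hyz : y ≠ z) (hyw : y ≠ w)
    (hzw : z ≠ w) (hReq : R = {x, y, z, w}) :
    ∃ D ∈ U.2, D.1 = {x, y} ∧ xi D = R ∧
      (D.2 = ({{z, w}, ∅} : Finset (Finset ℕ)) ∨ D.2 = {{z}, {w}}) := by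
  have hsub : ({x, y} : Finset ℕ) ⊆ U.1 := by
    intro t ht
    apply hR
    rw [hReq]
    simp only [Finset.mem_insert, Finset.mem_singleton] at ht ⊢
    tauto
  have hTU : ({z, w} : Finset ℕ) ⊆ U.1 \ {x, y} := by
    intro t ht
    simp only [Finset.mem_insert, Finset.mem_singleton] at ht
    rw [Finset.mem_sdiff]
    constructor
    · apply hR; rw [hReq]; simp only [Finset.mem_insert, Finset.mem_singleton]; tauto
    · simp only [Finset.mem_insert, Finset.mem_singleton]; omega
  obtain ⟨D, hD, hD1, hDu⟩ :=
    udps_exists hU hsub hTU (Finset.card_pair hxy) (Finset.card_pair hzw)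
  refine ⟨D, hD, hD1, ?_, udps_shape hU hD hzw hDu⟩
  rw [xi, hD1, hDu, hReq]
  ext t; simp only [Finset.mem_union, Finset.mem_insert, Finset.mem_singleton]; tauto

lemma ne_dividon' {D E : Dividon} {e : ℕ} (he : e ∈ E.1) (hne : e ∉ D.1) : D ≠ E :=
  fun h => hne (h ▸ he)

end PerR
section Forward

set_option maxHeartbeats 3200000 in
lemma forward_R {U : PreDPS} (hU : IsUDPS U) {R : Finset ℕ} (hR : R ⊆ U.1) (hc : R.card = 4)
    (law1 : ∀ D₁ ∈ U.2, ∀ D₂ ∈ U.2, ∀ D₃ ∈ U.2,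
      D₁ ≠ D₂ → D₁ ≠ D₃ → D₂ ≠ D₃ → xi D₁ = R → xi D₂ = R → xi D₃ = R →
      (D₁.1 ∩ D₂.1 ∩ D₃.1).card = 1 → (psi D₁.2 = 0 ↔ psi D₂.2 = psi D₃.2))
    (law3 : ∀ D₁ ∈ U.2, ∀ D₂ ∈ U.2, ∀ D₃ ∈ U.2,
      D₁ ≠ D₂ → D₁ ≠ D₃ → D₂ ≠ D₃ → xi D₁ = R → xi D₂ = R → xi D₃ = R →
      (D₁.1 ∪ D₂.1 ∪ D₃.1).card = 3 → psi D₁.2 = 0 → psi D₂.2 = 0 → psi D₃.2 = 1) :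
    OmegaIsom (U.2.filter fun D => xi D = R) Conc41.2 ∨
      OmegaIsom (U.2.filter fun D => xi D = R) Conv4.2 := by
  obtain ⟨p, q, r, s, hpq, hpr, hps, hqr, hqs, hrs, hReq⟩ := card_eq_four' hc
  obtain ⟨Dpq, hDpq, hpq1, hpqx, hpq2d⟩ :=
    get_dividon hU hR hpq hpr hps hqr hqs hrs hReq
  obtain ⟨Dpr, hDpr, hpr1, hprx, hpr2d⟩ :=
    get_dividon hU hR hpr hpq hps (Ne.symm hqr) hrs hqs
      (by rw [hReq]; ext t; simp only [Finset.mem_insert, Finset.mem_singleton]; omega)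
  obtain ⟨Dps, hDps, hps1, hpsx, hps2d⟩ :=
    get_dividon hU hR hps hpq hpr (Ne.symm hqs) (Ne.symm hrs) hqr
      (by rw [hReq]; ext t; simp only [Finset.mem_insert, Finset.mem_singleton]; omega)
  obtain ⟨Dqr, hDqr, hqr1, hqrx, hqr2d⟩ :=
    get_dividon hU hR hqr (Ne.symm hpq) hqs (Ne.symm hpr) hrs hps
      (by rw [hReq]; ext t; simp only [Finset.mem_insert, Finset.mem_singleton]; omega)
  obtain ⟨Dqs, hDqs, hqs1, hqsx, hqs2d⟩ :=
    get_dividon hU hR hqs (Ne.symm hpq) hqr (Ne.symm hps) (Ne.symm hrs) hpr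
      (by rw [hReq]; ext t; simp only [Finset.mem_insert, Finset.mem_singleton]; omega)
  obtain ⟨Drs, hDrs, hrs1, hrsx, hrs2d⟩ :=
    get_dividon hU hR hrs (Ne.symm hpr) (Ne.symm hqr) (Ne.symm hps) (Ne.symm hqs) hpq
      (by rw [hReq]; ext t; simp only [Finset.mem_insert, Finset.mem_singleton]; omega)
  have n_pq_pr : Dpq ≠ Dpr :=
    ne_dividon' (show r ∈ Dpr.1 by rw [hpr1]; simp) (by rw [hpq1]; simp; omega)
  have n_pq_ps : Dpq ≠ Dps :=
    ne_dividon' (show s ∈ Dps.1 by rw [hps1]; simp) (by rw [hpq1]; simp; omega)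
  have n_pr_ps : Dpr ≠ Dps :=
    ne_dividon' (show s ∈ Dps.1 by rw [hps1]; simp) (by rw [hpr1]; simp; omega)
  have n_pq_qr : Dpq ≠ Dqr :=
    ne_dividon' (show r ∈ Dqr.1 by rw [hqr1]; simp) (by rw [hpq1]; simp; omega)
  have n_pq_qs : Dpq ≠ Dqs :=
    ne_dividon' (show s ∈ Dqs.1 by rw [hqs1]; simp) (by rw [hpq1]; simp; omega)
  have n_qr_qs : Dqr ≠ Dqs :=
    ne_dividon' (show s ∈ Dqs.1 by rw [hqs1]; simp) (by rw [hqr1]; simp; omega)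
  have n_pr_qr : Dpr ≠ Dqr :=
    ne_dividon' (show q ∈ Dqr.1 by rw [hqr1]; simp) (by rw [hpr1]; simp; omega)
  have n_pr_rs : Dpr ≠ Drs :=
    ne_dividon' (show s ∈ Drs.1 by rw [hrs1]; simp) (by rw [hpr1]; simp; omega)
  have n_qr_rs : Dqr ≠ Drs :=
    ne_dividon' (show s ∈ Drs.1 by rw [hrs1]; simp) (by rw [hqr1]; simp; omega)
  have n_ps_qs : Dps ≠ Dqs :=
    ne_dividon' (show q ∈ Dqs.1 by rw [hqs1]; simp) (by rw [hps1]; simp; omega)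
  have n_ps_rs : Dps ≠ Drs :=
    ne_dividon' (show r ∈ Drs.1 by rw [hrs1]; simp) (by rw [hps1]; simp; omega)
  have n_qs_rs : Dqs ≠ Drs :=
    ne_dividon' (show r ∈ Drs.1 by rw [hrs1]; simp) (by rw [hqs1]; simp; omega)
  have i_p : (Dpq.1 ∩ Dpr.1 ∩ Dps.1).card = 1 := by
    rw [hpq1, hpr1, hps1,
      show (({p, q} : Finset ℕ) ∩ {p, r} ∩ {p, s}) = {p} by
        ext t; simp only [Finset.mem_inter, Finset.mem_insert, Finset.mem_singleton]; omega,
      Finset.card_singleton]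
  have i_q : (Dpq.1 ∩ Dqr.1 ∩ Dqs.1).card = 1 := by
    rw [hpq1, hqr1, hqs1,
      show (({p, q} : Finset ℕ) ∩ {q, r} ∩ {q, s}) = {q} by
        ext t; simp only [Finset.mem_inter, Finset.mem_insert, Finset.mem_singleton]; omega,
      Finset.card_singleton]
  have i_r : (Dpr.1 ∩ Dqr.1 ∩ Drs.1).card = 1 := by
    rw [hpr1, hqr1, hrs1,
      show (({p, r} : Finset ℕ) ∩ {q, r} ∩ {r, s}) = {r} by
        ext t; simp only [Finset.mem_inter, Finset.mem_insert, Finset.mem_singleton]; omega,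
      Finset.card_singleton]
  have i_s : (Dps.1 ∩ Dqs.1 ∩ Drs.1).card = 1 := by
    rw [hps1, hqs1, hrs1,
      show (({p, s} : Finset ℕ) ∩ {q, s} ∩ {r, s}) = {s} by
        ext t; simp only [Finset.mem_inter, Finset.mem_insert, Finset.mem_singleton]; omega,
      Finset.card_singleton]
  have u_t : (Dqr.1 ∪ Dqs.1 ∪ Drs.1).card = 3 := by
    rw [hqr1, hqs1, hrs1,
      show (({q, r} : Finset ℕ) ∪ {q, s} ∪ {r, s}) = {q, r, s} by
        ext t; simp only [Finset.mem_union, Finset.mem_insert, Finset.mem_singleton]; omega,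
      Finset.card_insert_of_notMem (by simp only [Finset.mem_insert, Finset.mem_singleton]; omega),
      Finset.card_insert_of_notMem (by simp only [Finset.mem_singleton]; omega),
      Finset.card_singleton]
  have H1 := law1 Dpq hDpq Dpr hDpr Dps hDps n_pq_pr n_pq_ps n_pr_ps hpqx hprx hpsx i_p
  have H2 := law1 Dpq hDpq Dqr hDqr Dqs hDqs n_pq_qr n_pq_qs n_qr_qs hpqx hqrx hqsx i_q
  have H3 := law1 Dpr hDpr Dqr hDqr Drs hDrs n_pr_qr n_pr_rs n_qr_rs hprx hqrx hrsx i_r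
  have H4 := law1 Dps hDps Dqs hDqs Drs hDrs n_ps_qs n_ps_rs n_qs_rs hpsx hqsx hrsx i_s
  have T1 := law3 Dqr hDqr Dqs hDqs Drs hDrs n_qr_qs n_qr_rs n_qs_rs hqrx hqsx hrsx u_t
  have hcard : (U.2.filter fun D => xi D = R).card = 6 := omegaR_card hU hR hc
  have hsupR : (U.2.filter fun D => xi D = R).sup xi = R :=
    omegaR_sup ⟨Dpq, Finset.mem_filter.2 ⟨hDpq, hpqx⟩⟩
  have hcov : ∀ D ∈ U.2.filter fun D => xi D = R,
      D = Dpq ∨ D = Dpr ∨ D = Dps ∨ D = Dqr ∨ D = Dqs ∨ D = Drs := by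
    intro D hD
    obtain ⟨hDU, hDx⟩ := Finset.mem_filter.1 hD
    have hsub : D.1 ⊆ R := by rw [← hDx, xi]; exact Finset.subset_union_left
    have hc2 := (udps_unionOf_eq hU hDU).2.2.1
    rcases pair_cases (hReq ▸ hsub) hc2 with h | h | h | h | h | h
    · exact Or.inl (udps_unique hU hDU hDpq (h.trans hpq1.symm) (hDx.trans hpqx.symm))
    · exact Or.inr <| Or.inl
        (udps_unique hU hDU hDpr (h.trans hpr1.symm) (hDx.trans hprx.symm))
    · exact Or.inr <| Or.inr <| Or.inl
        (udps_unique hU hDU hDps (h.trans hps1.symm) (hDx.trans hpsx.symm))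
    · exact Or.inr <| Or.inr <| Or.inr <| Or.inl
        (udps_unique hU hDU hDqr (h.trans hqr1.symm) (hDx.trans hqrx.symm))
    · exact Or.inr <| Or.inr <| Or.inr <| Or.inr <| Or.inl
        (udps_unique hU hDU hDqs (h.trans hqs1.symm) (hDx.trans hqsx.symm))
    · exact Or.inr <| Or.inr <| Or.inr <| Or.inr <| Or.inr
        (udps_unique hU hDU hDrs (h.trans hrs1.symm) (hDx.trans hrsx.symm))
  rcases hpq2d with hpq2 | hpq2 <;> rcases hpr2d with hpr2 | hpr2 <;>
    rcases hps2d with hps2 | hps2 <;> rcases hqr2d with hqr2 | hqr2 <;>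
    rcases hqs2d with hqs2 | hqs2 <;> rcases hrs2d with hrs2 | hrs2 <;>
    first
    | (exfalso; revert H1 H2 H3 H4 T1
       simp only [hpq2, hpr2, hps2, hqr2, hqs2, hrs2, psi_singletons, psi_merged hrs,
         psi_merged hqs, psi_merged hqr, psi_merged hps, psi_merged hpr, psi_merged hpq,
         Nat.one_ne_zero, Nat.zero_ne_one, iff_true, true_iff, iff_false, false_iff,
         true_implies, false_implies, implies_true]
       all_goals decide)
    | (skip
       guard_hyp hpq2 : Dpq.2 = {{r}, {s}}
       guard_hyp hpr2 : Dpr.2 = {{q}, {s}}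
       guard_hyp hps2 : Dps.2 = {{q}, {r}}
       guard_hyp hqr2 : Dqr.2 = {{p, s}, ∅}
       guard_hyp hqs2 : Dqs.2 = {{p, r}, ∅}
       guard_hyp hrs2 : Drs.2 = {{p, q}, ∅}
       left
       exact toConc hpq hpr hps hqr hqs hrs hcard (by rw [hsupR, hReq])
         (by intro D hD; rcases hcov D hD with rfl | rfl | rfl | rfl | rfl | rfl <;> simp [Prod.ext_iff, hpq1, hpq2, hpr1, hpr2, hps1, hps2, hqr1, hqr2, hqs1, hqs2, hrs1, hrs2, Finset.pair_comm]))
    | (skip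
       guard_hyp hpq2 : Dpq.2 = {{r}, {s}}
       guard_hyp hpr2 : Dpr.2 = {{q, s}, ∅}
       guard_hyp hps2 : Dps.2 = {{q, r}, ∅}
       guard_hyp hqr2 : Dqr.2 = {{p}, {s}}
       guard_hyp hqs2 : Dqs.2 = {{p}, {r}}
       guard_hyp hrs2 : Drs.2 = {{p, q}, ∅}
       left
       exact toConc (Ne.symm hpq) hqr hqs hpr hps hrs hcard (by rw [hsupR, hReq]; ext t; simp only [Finset.mem_insert, Finset.mem_singleton]; omega)
         (by intro D hD; rcases hcov D hD with rfl | rfl | rfl | rfl | rfl | rfl <;> simp [Prod.ext_iff, hpq1, hpq2, hpr1, hpr2, hps1, hps2, hqr1, hqr2, hqs1, hqs2, hrs1, hrs2, Finset.pair_comm]))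
    | (skip
       guard_hyp hpq2 : Dpq.2 = {{r, s}, ∅}
       guard_hyp hpr2 : Dpr.2 = {{q}, {s}}
       guard_hyp hps2 : Dps.2 = {{q, r}, ∅}
       guard_hyp hqr2 : Dqr.2 = {{p}, {s}}
       guard_hyp hqs2 : Dqs.2 = {{p, r}, ∅}
       guard_hyp hrs2 : Drs.2 = {{p}, {q}}
       left
       exact toConc (Ne.symm hpr) (Ne.symm hqr) hrs hpq hps hqs hcard (by rw [hsupR, hReq]; ext t; simp only [Finset.mem_insert, Finset.mem_singleton]; omega)
         (by intro D hD; rcases hcov D hD with rfl | rfl | rfl | rfl | rfl | rfl <;> simp [Prod.ext_iff, hpq1, hpq2, hpr1, hpr2, hps1, hps2, hqr1, hqr2, hqs1, hqs2, hrs1, hrs2, Finset.pair_comm]))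
    | (skip
       guard_hyp hpq2 : Dpq.2 = {{r, s}, ∅}
       guard_hyp hpr2 : Dpr.2 = {{q, s}, ∅}
       guard_hyp hps2 : Dps.2 = {{q}, {r}}
       guard_hyp hqr2 : Dqr.2 = {{p, s}, ∅}
       guard_hyp hqs2 : Dqs.2 = {{p}, {r}}
       guard_hyp hrs2 : Drs.2 = {{p}, {q}}
       left
       exact toConc (Ne.symm hps) (Ne.symm hqs) (Ne.symm hrs) hpq hpr hqr hcard (by rw [hsupR, hReq]; ext t; simp only [Finset.mem_insert, Finset.mem_singleton]; omega)
         (by intro D hD; rcases hcov D hD with rfl | rfl | rfl | rfl | rfl | rfl <;> simp [Prod.ext_iff, hpq1, hpq2, hpr1, hpr2, hps1, hps2, hqr1, hqr2, hqs1, hqs2, hrs1, hrs2, Finset.pair_comm]))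
    | (skip
       guard_hyp hpq2 : Dpq.2 = {{r}, {s}}
       guard_hyp hpr2 : Dpr.2 = {{q, s}, ∅}
       guard_hyp hps2 : Dps.2 = {{q, r}, ∅}
       guard_hyp hqr2 : Dqr.2 = {{p, s}, ∅}
       guard_hyp hqs2 : Dqs.2 = {{p, r}, ∅}
       guard_hyp hrs2 : Drs.2 = {{p}, {q}}
       right
       exact toConv hpr hpq hps (Ne.symm hqr) hrs hqs hcard (by rw [hsupR, hReq]; ext t; simp only [Finset.mem_insert, Finset.mem_singleton]; omega)
         (by intro D hD; rcases hcov D hD with rfl | rfl | rfl | rfl | rfl | rfl <;> simp [Prod.ext_iff, hpq1, hpq2, hpr1, hpr2, hps1, hps2, hqr1, hqr2, hqs1, hqs2, hrs1, hrs2, Finset.pair_comm]))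
    | (skip
       guard_hyp hpq2 : Dpq.2 = {{r, s}, ∅}
       guard_hyp hpr2 : Dpr.2 = {{q}, {s}}
       guard_hyp hps2 : Dps.2 = {{q, r}, ∅}
       guard_hyp hqr2 : Dqr.2 = {{p, s}, ∅}
       guard_hyp hqs2 : Dqs.2 = {{p}, {r}}
       guard_hyp hrs2 : Drs.2 = {{p, q}, ∅}
       right
       exact toConv hpq hpr hps hqr hqs hrs hcard (by rw [hsupR, hReq])
         (by intro D hD; rcases hcov D hD with rfl | rfl | rfl | rfl | rfl | rfl <;> simp [Prod.ext_iff, hpq1, hpq2, hpr1, hpr2, hps1, hps2, hqr1, hqr2, hqs1, hqs2, hrs1, hrs2, Finset.pair_comm]))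
    | (skip
       guard_hyp hpq2 : Dpq.2 = {{r, s}, ∅}
       guard_hyp hpr2 : Dpr.2 = {{q, s}, ∅}
       guard_hyp hps2 : Dps.2 = {{q}, {r}}
       guard_hyp hqr2 : Dqr.2 = {{p}, {s}}
       guard_hyp hqs2 : Dqs.2 = {{p, r}, ∅}
       guard_hyp hrs2 : Drs.2 = {{p, q}, ∅}
       right
       exact toConv hpq hps hpr hqs hqr (Ne.symm hrs) hcard (by rw [hsupR, hReq]; ext t; simp only [Finset.mem_insert, Finset.mem_singleton]; omega)
         (by intro D hD; rcases hcov D hD with rfl | rfl | rfl | rfl | rfl | rfl <;> simp [Prod.ext_iff, hpq1, hpq2, hpr1, hpr2, hps1, hps2, hqr1, hqr2, hqs1, hqs2, hrs1, hrs2, Finset.pair_comm]))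

end Forward
section Backward

lemma psi_image {f : ℕ → ℕ} {R : Finset ℕ} (hf : Set.InjOn f ↑R) {δ : Finset (Finset ℕ)}
    (hδ : ∀ dv ∈ δ, dv ⊆ R) : psi (δ.image (Finset.image f)) = psi δ := by
  have hiff : (∃ dv ∈ δ.image (Finset.image f), dv.card = 2) ↔ ∃ dv ∈ δ, dv.card = 2 := by
    constructor
    · rintro ⟨dv', hdv', hcd⟩
      obtain ⟨dv, hdv, rfl⟩ := Finset.mem_image.1 hdv'
      refine ⟨dv, hdv, ?_⟩
      rwa [Finset.card_image_of_injOn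
        (Set.InjOn.mono (Finset.coe_subset.2 (hδ dv hdv)) hf)] at hcd
    · rintro ⟨dv, hdv, hcd⟩
      refine ⟨dv.image f, Finset.mem_image_of_mem _ hdv, ?_⟩
      rwa [Finset.card_image_of_injOn
        (Set.InjOn.mono (Finset.coe_subset.2 (hδ dv hdv)) hf)]
  simp only [psi]
  rw [if_congr hiff rfl rfl]

lemma image_eq_of_injOn {f : ℕ → ℕ} {R A B : Finset ℕ} (hf : Set.InjOn f ↑R)
    (hA : A ⊆ R) (hB : B ⊆ R) (h : A.image f = B.image f) : A = B := by
  ext a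
  constructor
  · intro ha
    have : f a ∈ B.image f := h ▸ Finset.mem_image_of_mem f ha
    obtain ⟨b, hb, hba⟩ := Finset.mem_image.1 this
    rwa [← hf (Finset.mem_coe.2 (hB hb)) (Finset.mem_coe.2 (hA ha)) hba]
  · intro ha
    have : f a ∈ A.image f := h ▸ Finset.mem_image_of_mem f ha
    obtain ⟨b, hb, hba⟩ := Finset.mem_image.1 this
    rwa [← hf (Finset.mem_coe.2 (hA hb)) (Finset.mem_coe.2 (hB ha)) hba]

lemma inter3_image {f : ℕ → ℕ} {R A B C : Finset ℕ} (hf : Set.InjOn f ↑R)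
    (hA : A ⊆ R) (hB : B ⊆ R) (hC : C ⊆ R) :
    (A.image f ∩ B.image f ∩ C.image f).card = (A ∩ B ∩ C).card := by
  rw [← Finset.image_inter_of_injOn _ _
      (Set.InjOn.mono (by rw [Set.union_subset_iff]; exact
        ⟨Finset.coe_subset.2 hA, Finset.coe_subset.2 hB⟩) hf),
    ← Finset.image_inter_of_injOn _ _
      (Set.InjOn.mono (by rw [Set.union_subset_iff]; constructor
                          · exact subset_trans (by exact_mod_cast Finset.inter_subset_left) (Finset.coe_subset.2 hA)
                          · exact Finset.coe_subset.2 hC) hf)]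
  exact Finset.card_image_of_injOn (Set.InjOn.mono (by
    refine subset_trans ?_ (Finset.coe_subset.2 hA)
    exact_mod_cast subset_trans Finset.inter_subset_left Finset.inter_subset_left) hf)

lemma union3_image {f : ℕ → ℕ} {R A B C : Finset ℕ} (hf : Set.InjOn f ↑R)
    (hA : A ⊆ R) (hB : B ⊆ R) (hC : C ⊆ R) :
    (A.image f ∪ B.image f ∪ C.image f).card = (A ∪ B ∪ C).card := by
  rw [← Finset.image_union, ← Finset.image_union]
  apply Finset.card_image_of_injOn
  apply Set.InjOn.mono _ hf
  intro x hx
  simp only [Finset.coe_union, Set.mem_union, Finset.mem_coe] at hx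
  rcases hx with (hx | hx) | hx
  · exact Finset.mem_coe.2 (hA hx)
  · exact Finset.mem_coe.2 (hB hx)
  · exact Finset.mem_coe.2 (hC hx)

lemma backward_core {U : PreDPS} (hU : IsUDPS U) {R : Finset ℕ} (hc : R.card = 4)
    {M : Finset Dividon} (hMsup : M.sup xi = ({1, 2, 3, 4} : Finset ℕ))
    (mu1 : ∀ E1 ∈ M, ∀ E2 ∈ M, ∀ E3 ∈ M,
      E1 ≠ E2 ∧ E1 ≠ E3 ∧ E2 ≠ E3 ∧ (E1.1 ∩ E2.1 ∩ E3.1).card = 1 →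
      (psi E1.2 = 0 ↔ psi E2.2 = psi E3.2))
    (mu2 : ∀ E1 ∈ M, ∀ E2 ∈ M, ∀ E3 ∈ M,
      E1 ≠ E2 ∧ E1 ≠ E3 ∧ E2 ≠ E3 ∧ (E1.1 ∩ E2.1 ∩ E3.1).card = 1 →
      (psi E1.2 = 1 ↔ psi E2.2 ≠ psi E3.2))
    (mu3 : ∀ E1 ∈ M, ∀ E2 ∈ M, ∀ E3 ∈ M,
      E1 ≠ E2 ∧ E1 ≠ E3 ∧ E2 ≠ E3 ∧ (E1.1 ∪ E2.1 ∪ E3.1).card = 3 ∧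
        psi E1.2 = 0 ∧ psi E2.2 = 0 → psi E3.2 = 1)
    (hiso : OmegaIsom (U.2.filter fun D => xi D = R) M)
    {D1 D2 D3 : Dividon} (h1 : D1 ∈ U.2) (h2 : D2 ∈ U.2) (h3 : D3 ∈ U.2)
    (n12 : D1 ≠ D2) (n13 : D1 ≠ D3) (n23 : D2 ≠ D3)
    (x1 : xi D1 = R) (x2 : xi D2 = R) (x3 : xi D3 = R) :
    ((D1.1 ∩ D2.1 ∩ D3.1).card = 1 → ((psi D1.2 = 0 ↔ psi D2.2 = psi D3.2) ∧
       (psi D1.2 = 1 ↔ psi D2.2 ≠ psi D3.2))) ∧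
    ((D1.1 ∪ D2.1 ∪ D3.1).card = 3 → psi D1.2 = 0 → psi D2.2 = 0 → psi D3.2 = 1) := by
  obtain ⟨hcard, f, hbij, hmem⟩ := hiso
  have hsup : (U.2.filter fun D => xi D = R).sup xi = R :=
    omegaR_sup ⟨D1, Finset.mem_filter.2 ⟨h1, x1⟩⟩
  rw [hsup, hMsup] at hbij
  have hf : Set.InjOn f ↑R := hbij.injOn
  have m1 : D1 ∈ U.2.filter fun D => xi D = R := Finset.mem_filter.2 ⟨h1, x1⟩
  have m2 : D2 ∈ U.2.filter fun D => xi D = R := Finset.mem_filter.2 ⟨h2, x2⟩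
  have m3 : D3 ∈ U.2.filter fun D => xi D = R := Finset.mem_filter.2 ⟨h3, x3⟩
  have s1 : D1.1 ⊆ R := by rw [← x1, xi]; exact Finset.subset_union_left
  have s2 : D2.1 ⊆ R := by rw [← x2, xi]; exact Finset.subset_union_left
  have s3 : D3.1 ⊆ R := by rw [← x3, xi]; exact Finset.subset_union_left
  have dv1 : ∀ dv ∈ D1.2, dv ⊆ R := fun dv hdv => subset_trans
    (subset_trans (Finset.le_sup (f := id) hdv) (by rw [← x1, xi]; exact Finset.subset_union_right))
    (le_refl _)
  have dv2 : ∀ dv ∈ D2.2, dv ⊆ R := fun dv hdv => subset_trans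
    (subset_trans (Finset.le_sup (f := id) hdv) (by rw [← x2, xi]; exact Finset.subset_union_right))
    (le_refl _)
  have dv3 : ∀ dv ∈ D3.2, dv ⊆ R := fun dv hdv => subset_trans
    (subset_trans (Finset.le_sup (f := id) hdv) (by rw [← x3, xi]; exact Finset.subset_union_right))
    (le_refl _)
  have E1 := hmem D1 m1
  have E2 := hmem D2 m2
  have E3 := hmem D3 m3
  have d12 : D1.1 ≠ D2.1 := fun h => n12 (udps_unique hU h1 h2 h (x1.trans x2.symm))
  have d13 : D1.1 ≠ D3.1 := fun h => n13 (udps_unique hU h1 h3 h (x1.trans x3.symm))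
  have d23 : D2.1 ≠ D3.1 := fun h => n23 (udps_unique hU h2 h3 h (x2.trans x3.symm))
  have e12 : (D1.1.image f, D1.2.image (Finset.image f)) ≠
      (D2.1.image f, D2.2.image (Finset.image f)) := by
    intro h
    exact d12 (image_eq_of_injOn hf s1 s2 (congrArg Prod.fst h))
  have e13 : (D1.1.image f, D1.2.image (Finset.image f)) ≠
      (D3.1.image f, D3.2.image (Finset.image f)) := by
    intro h
    exact d13 (image_eq_of_injOn hf s1 s3 (congrArg Prod.fst h))
  have e23 : (D2.1.image f, D2.2.image (Finset.image f)) ≠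
      (D3.1.image f, D3.2.image (Finset.image f)) := by
    intro h
    exact d23 (image_eq_of_injOn hf s2 s3 (congrArg Prod.fst h))
  have p1 : psi (D1.2.image (Finset.image f)) = psi D1.2 := psi_image hf dv1
  have p2 : psi (D2.2.image (Finset.image f)) = psi D2.2 := psi_image hf dv2
  have p3 : psi (D3.2.image (Finset.image f)) = psi D3.2 := psi_image hf dv3
  constructor
  · intro hInter
    have hI : ((D1.1.image f) ∩ (D2.1.image f) ∩ (D3.1.image f)).card = 1 := by
      rw [inter3_image hf s1 s2 s3]; exact hInter
    constructor
    · have := mu1 _ E1 _ E2 _ E3 ⟨e12, e13, e23, hI⟩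
      rwa [p1, p2, p3] at this
    · have := mu2 _ E1 _ E2 _ E3 ⟨e12, e13, e23, hI⟩
      rwa [p1, p2, p3] at this
  · intro hUnion hh1 hh2
    have hUu : ((D1.1.image f) ∪ (D2.1.image f) ∪ (D3.1.image f)).card = 3 := by
      rw [union3_image hf s1 s2 s3]; exact hUnion
    have := mu3 _ E1 _ E2 _ E3 ⟨e12, e13, e23, hUu, by rw [p1]; exact hh1, by rw [p2]; exact hh2⟩
    rwa [p3] at this

end Backward
/-- Core of Lemma 3: a unit div point set `(P,Ω)` with `|P| ≥ 4` satisfies (U1), (U2), (U3)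
iff for every 4-element subset `R` of `P`, the set `{D ∈ Ω : ξ(D) = R}` is isomorphic
to the dividon set of Conc₄¹ or to the dividon set of Conv₄. -/
theorem stmt_6 (U : PreDPS) (hU : IsUDPS U) (h4 : 4 ≤ U.1.card) :
    LawsUDPS U ↔
      ∀ R ⊆ U.1, R.card = 4 →
        (OmegaIsom (U.2.filter fun D => xi D = R) Conc41.2 ∨
         OmegaIsom (U.2.filter fun D => xi D = R) Conv4.2) := by
  constructor
  · intro hlaws R hR hc
    exact forward_R hU hR hc (hlaws.1 R hR hc) (hlaws.2.2 R hR hc)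
  · intro hiso
    refine ⟨?_, ?_, ?_⟩
    · intro R hR hc D1 hD1 D2 hD2 D3 hD3 n12 n13 n23 x1 x2 x3 hI
      rcases hiso R hR hc with h | h
      · exact ((backward_core hU hc conc_sup conc_u1 conc_u2 conc_u3 h hD1 hD2 hD3
          n12 n13 n23 x1 x2 x3).1 hI).1
      · exact ((backward_core hU hc conv_sup conv_u1 conv_u2 conv_u3 h hD1 hD2 hD3
          n12 n13 n23 x1 x2 x3).1 hI).1
    · intro R hR hc D1 hD1 D2 hD2 D3 hD3 n12 n13 n23 x1 x2 x3 hI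
      rcases hiso R hR hc with h | h
      · exact ((backward_core hU hc conc_sup conc_u1 conc_u2 conc_u3 h hD1 hD2 hD3
          n12 n13 n23 x1 x2 x3).1 hI).2
      · exact ((backward_core hU hc conv_sup conv_u1 conv_u2 conv_u3 h hD1 hD2 hD3
          n12 n13 n23 x1 x2 x3).1 hI).2
    · intro R hR hc D1 hD1 D2 hD2 D3 hD3 n12 n13 n23 x1 x2 x3 hUc hp1 hp2
      rcases hiso R hR hc with h | h
      · exact (backward_core hU hc conc_sup conc_u1 conc_u2 conc_u3 h hD1 hD2 hD3
          n12 n13 n23 x1 x2 x3).2 hUc hp1 hp2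
      · exact (backward_core hU hc conv_sup conv_u1 conv_u2 conv_u3 h hD1 hD2 hD3
          n12 n13 n23 x1 x2 x3).2 hUc hp1 hp2
end

section
/- For any div point set X with at least 4 points, any natural numbers m, n ≥ 1, any sub div point set A of X of m points, and any sub div point set B of X of n points, the sets of unit dividons of F_udps(A) and F_udps(B) have exactly 6·C(k,4) elements in common, where k = |π₁(A) ∩ π₁(B)| is the number of points that A and B have in common (Lemma 4). -/
open Finset

/-- Auxiliary: the payload constructor in `Fudps`. -/
def mkUD (D : Dividon) (T : Finset ℕ) : Dividon :=
  (D.1, if ∃ dv ∈ D.2, T ⊆ dv then ({T, ∅} : Finset (Finset ℕ))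
        else T.image fun a => ({a} : Finset ℕ))

lemma unionOf_mkUD (D : Dividon) (T : Finset ℕ) : unionOf (mkUD D T).2 = T := by
  unfold mkUD unionOf
  split
  · simp
  · ext a
    simp

lemma xi_mkUD (D : Dividon) (T : Finset ℕ) : xi (mkUD D T) = D.1 ∪ T := by
  rw [xi, unionOf_mkUD]; rfl

lemma choose_arith (k : ℕ) : k.choose 2 * (k - 2).choose 2 = 6 * k.choose 4 := by
  rcases le_or_gt 4 k with h | h
  · have := Nat.choose_mul (n := k) (by norm_num : 2 ≤ 4)
    rw [show Nat.choose 4 2 = 6 from rfl, show 4 - 2 = 2 from rfl] at this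
    omega
  · rw [Nat.choose_eq_zero_of_lt h, Nat.choose_eq_zero_of_lt (by omega : k - 2 < 2)]
    simp

theorem stmt_7' (X : PreDPS) (hX : IsDPS X) (h4 : 4 ≤ X.1.card)
    (m n : ℕ) (hm : 1 ≤ m) (hn : 1 ≤ n)
    (Pa Pb : Finset ℕ) (A B : PreDPS)
    (hPa : Pa.card = m) (hPb : Pb.card = n)
    (hA : IsSdps X Pa A) (hB : IsSdps X Pb B) :
    ((Fudps A).2 ∩ (Fudps B).2).card = 6 * Nat.choose ((A.1 ∩ B.1).card) 4 := by
  obtain ⟨hPaX, -, -, hA1, hAeq⟩ := hA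
  obtain ⟨hPbX, -, -, hB1, hBeq⟩ := hB
  obtain ⟨-, hcard, hdiv, huniq⟩ := hX
  set S : Finset ℕ := Pa ∩ Pb with hS
  have hA1B1 : A.1 ∩ B.1 = S := by rw [hA1, hB1]
  have hSX : S ⊆ X.1 := (Finset.inter_subset_left).trans hPaX
  -- Step 1: the intersection is a filter of (Fudps X).2
  have step1 : (Fudps A).2 ∩ (Fudps B).2
      = (Fudps X).2.filter fun D => xi D ⊆ S := by
    rw [hAeq, hBeq, ← Finset.filter_and]
    apply Finset.filter_congr
    intro D _
    exact Finset.subset_inter_iff.symm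
  -- Step 2: rewrite the filter as a biUnion over dividons with divider inside S
  have step2 : (Fudps X).2.filter (fun D => xi D ⊆ S)
      = (X.2.filter fun D => D.1 ⊆ S).biUnion
          (fun D => ((S \ D.1).powersetCard 2).image (mkUD D)) := by
    ext E
    simp only [Fudps, Finset.mem_filter, Finset.mem_biUnion, Finset.mem_image,
      Finset.mem_powersetCard]
    constructor
    · rintro ⟨⟨D, hD, T, ⟨hTsub, hT2⟩, rfl⟩, hxi⟩
      rw [show (D.1, if ∃ dv ∈ D.2, T ⊆ dv then ({T, ∅} : Finset (Finset ℕ))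
            else T.image fun a => ({a} : Finset ℕ)) = mkUD D T from rfl] at *
      rw [xi_mkUD] at hxi
      refine ⟨D, ⟨hD, (Finset.union_subset_iff.mp hxi).1⟩, T, ⟨?_, hT2⟩, rfl⟩
      intro a ha
      have := hTsub ha
      rw [Finset.mem_sdiff] at this ⊢
      exact ⟨(Finset.union_subset_iff.mp hxi).2 ha, this.2⟩
    · rintro ⟨D, hD, T, ⟨hTsub, hT2⟩, rfl⟩
      refine ⟨⟨D, hD.1, T, ⟨?_, hT2⟩, rfl⟩, ?_⟩
      · intro a ha
        have := hTsub ha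
        rw [Finset.mem_sdiff] at this ⊢
        exact ⟨hSX this.1, this.2⟩
      · show xi (mkUD D T) ⊆ S
        rw [xi_mkUD]
        exact Finset.union_subset hD.2 (hTsub.trans Finset.sdiff_subset)
  -- injectivity of first components of dividons in X.2
  have hfst_inj : Set.InjOn Prod.fst (X.2 : Set Dividon) := by
    intro D1 h1 D2 h2 h
    exact huniq D1 (Finset.mem_coe.mp h1) D2 (Finset.mem_coe.mp h2) h
  -- count of dividons with divider inside S
  have himg : X.2.image Prod.fst = X.1.powersetCard 2 := by
    apply Finset.eq_of_subset_of_card_le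
    · intro d hd
      rw [Finset.mem_image] at hd
      obtain ⟨D, hD, rfl⟩ := hd
      rw [Finset.mem_powersetCard]
      exact ⟨(hdiv D hD).2.1, (hdiv D hD).1⟩
    · rw [Finset.card_powersetCard, Finset.card_image_of_injOn hfst_inj, hcard]
  have hcount : (X.2.filter fun D => D.1 ⊆ S).card = S.card.choose 2 := by
    have : ((X.2.filter fun D => D.1 ⊆ S).image Prod.fst).card
        = (X.2.filter fun D => D.1 ⊆ S).card :=
      Finset.card_image_of_injOn (hfst_inj.mono (by
        intro D hD; exact Finset.mem_of_mem_filter D hD))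
    rw [← this]
    have h2 : (X.2.filter fun D => D.1 ⊆ S).image Prod.fst
        = S.powersetCard 2 := by
      ext d
      simp only [Finset.mem_image, Finset.mem_filter, Finset.mem_powersetCard]
      constructor
      · rintro ⟨D, ⟨hD, hsub⟩, rfl⟩
        exact ⟨hsub, (hdiv D hD).1⟩
      · rintro ⟨hdS, hd2⟩
        have : d ∈ X.2.image Prod.fst := by
          rw [himg, Finset.mem_powersetCard]
          exact ⟨hdS.trans hSX, hd2⟩
        rw [Finset.mem_image] at this
        obtain ⟨D, hD, rfl⟩ := this
        exact ⟨D, ⟨hD, hdS⟩, rfl⟩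
    rw [h2, Finset.card_powersetCard]
  -- compute card of biUnion
  rw [step1, step2, Finset.card_biUnion, hA1B1]
  · have hconst : ∀ D ∈ X.2.filter (fun D => D.1 ⊆ S),
        (((S \ D.1).powersetCard 2).image (mkUD D)).card = (S.card - 2).choose 2 := by
      intro D hD
      rw [Finset.mem_filter] at hD
      rw [Finset.card_image_of_injOn, Finset.card_powersetCard,
        Finset.card_sdiff_of_subset hD.2, (hdiv D hD.1).1]
      intro T1 h1 T2 h2 h
      have := congrArg (fun E => unionOf E.2) h
      simpa [unionOf_mkUD] using this
    rw [Finset.sum_congr rfl hconst, Finset.sum_const, smul_eq_mul, hcount,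
      choose_arith]
  · -- pairwise disjoint
    intro D1 h1 D2 h2 hne
    rw [Finset.mem_coe, Finset.mem_filter] at h1 h2
    have hd : D1.1 ≠ D2.1 := fun h => hne (huniq D1 h1.1 D2 h2.1 h)
    simp only [Finset.disjoint_left, Finset.mem_image]
    rintro E ⟨T1, -, rfl⟩ ⟨T2, -, hE⟩
    exact hd (congrArg Prod.fst hE).symm

/-- Lemma 4: for any div point set `X` with at least 4 points and any two sub div point
sets `A` (of `m ≥ 1` points) and `B` (of `n ≥ 1` points) of `X`, the unit dividon sets of
`F_udps A` and `F_udps B` have exactly `6·C(k,4)` common elements, where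
`k = |π₁(A) ∩ π₁(B)|`. -/
theorem stmt_7 (X : PreDPS) (hX : IsDPS X) (h4 : 4 ≤ X.1.card)
    (m n : ℕ) (hm : 1 ≤ m) (hn : 1 ≤ n)
    (Pa Pb : Finset ℕ) (A B : PreDPS)
    (hPa : Pa.card = m) (hPb : Pb.card = n)
    (hA : IsSdps X Pa A) (hB : IsSdps X Pb B) :
    ((Fudps A).2 ∩ (Fudps B).2).card = 6 * Nat.choose ((A.1 ∩ B.1).card) 4 :=
  stmt_7' X hX h4 m n hm hn Pa Pb A B hPa hPb hA hB
end

section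
/- Let C be a function from the 2-element subsets of {1,2,3,4} to {0,1} such that for all pairwise distinct 2-element subsets d₁, d₂, d₃ with |d₁ ∩ d₂ ∩ d₃| = 1, both (C(d₁) = 0 iff C(d₂) = C(d₃)) and (C(d₁) = 1 iff C(d₂) ≠ C(d₃)) hold. Then exactly one of the following three scenarios occurs: (i) C(d) = 0 for all six 2-element subsets d; (ii) there exists x ∈ {1,2,3,4} such that C(d) = 0 iff x ∈ d (so exactly three subsets are colored 0); (iii) there exists a 2-element subset d₀ such that C(d) = 0 iff d = d₀ or d = {1,2,3,4} ∖ d₀ (so exactly two subsets are colored 0). -/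
open Finset

/-- Scenario (i): all six 2-element subsets are colored 0. -/
def Scenario1 (C : Finset ℕ → ℕ) : Prop :=
  ∀ d ⊆ ({1, 2, 3, 4} : Finset ℕ), d.card = 2 → C d = 0

/-- Scenario (ii): there is a point `x` such that exactly the 2-element subsets
containing `x` are colored 0. -/
def Scenario2 (C : Finset ℕ → ℕ) : Prop :=
  ∃ x ∈ ({1, 2, 3, 4} : Finset ℕ),
    ∀ d ⊆ ({1, 2, 3, 4} : Finset ℕ), d.card = 2 → (C d = 0 ↔ x ∈ d)

/-- Scenario (iii): there is a 2-element subset `d₀` such that exactly `d₀` and its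
complement are colored 0. -/
def Scenario3 (C : Finset ℕ → ℕ) : Prop :=
  ∃ d₀ ⊆ ({1, 2, 3, 4} : Finset ℕ), d₀.card = 2 ∧
    ∀ d ⊆ ({1, 2, 3, 4} : Finset ℕ), d.card = 2 →
      (C d = 0 ↔ (d = d₀ ∨ d = ({1, 2, 3, 4} : Finset ℕ) \ d₀))

lemma mem_pairs {d : Finset ℕ} (h1 : d ⊆ ({1,2,3,4}:Finset ℕ)) (h2 : d.card = 2) :
    d = {1,2} ∨ d = {1,3} ∨ d = {1,4} ∨ d = {2,3} ∨ d = {2,4} ∨ d = {3,4} := by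
  have hm : d ∈ Finset.powersetCard 2 ({1,2,3,4}:Finset ℕ) :=
    Finset.mem_powersetCard.2 ⟨h1,h2⟩
  have he : Finset.powersetCard 2 ({1,2,3,4}:Finset ℕ) =
      {{1,2},{1,3},{1,4},{2,3},{2,4},{3,4}} := by decide
  rw [he] at hm
  simpa using hm

lemma s12 : ({1,2}:Finset ℕ) ⊆ {1,2,3,4} := by decide
lemma s13 : ({1,3}:Finset ℕ) ⊆ {1,2,3,4} := by decide
lemma s14 : ({1,4}:Finset ℕ) ⊆ {1,2,3,4} := by decide
lemma s23 : ({2,3}:Finset ℕ) ⊆ {1,2,3,4} := by decide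
lemma s24 : ({2,4}:Finset ℕ) ⊆ {1,2,3,4} := by decide
lemma s34 : ({3,4}:Finset ℕ) ⊆ {1,2,3,4} := by decide
lemma c12 : ({1,2}:Finset ℕ).card = 2 := by decide
lemma c13 : ({1,3}:Finset ℕ).card = 2 := by decide
lemma c14 : ({1,4}:Finset ℕ).card = 2 := by decide
lemma c23 : ({2,3}:Finset ℕ).card = 2 := by decide
lemma c24 : ({2,4}:Finset ℕ).card = 2 := by decide
lemma c34 : ({3,4}:Finset ℕ).card = 2 := by decide
lemma sd12 : ({1,2,3,4}:Finset ℕ) \ {1,2} = {3,4} := by decide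
lemma sd13 : ({1,2,3,4}:Finset ℕ) \ {1,3} = {2,4} := by decide
lemma sd14 : ({1,2,3,4}:Finset ℕ) \ {1,4} = {2,3} := by decide
lemma sd23 : ({1,2,3,4}:Finset ℕ) \ {2,3} = {1,4} := by decide
lemma sd24 : ({1,2,3,4}:Finset ℕ) \ {2,4} = {1,3} := by decide
lemma sd34 : ({1,2,3,4}:Finset ℕ) \ {3,4} = {1,2} := by decide

set_option maxHeartbeats 1600000 in
/-- A {0,1}-coloring of the 2-element subsets of {1,2,3,4} satisfying the two local laws
falls in exactly one of the three scenarios. -/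
theorem stmt_8 (C : Finset ℕ → ℕ)
    (hrange : ∀ d ⊆ ({1, 2, 3, 4} : Finset ℕ), d.card = 2 → C d = 0 ∨ C d = 1)
    (hlaw : ∀ d₁ ⊆ ({1, 2, 3, 4} : Finset ℕ), ∀ d₂ ⊆ ({1, 2, 3, 4} : Finset ℕ),
      ∀ d₃ ⊆ ({1, 2, 3, 4} : Finset ℕ),
      d₁.card = 2 → d₂.card = 2 → d₃.card = 2 →
      d₁ ≠ d₂ → d₁ ≠ d₃ → d₂ ≠ d₃ → (d₁ ∩ d₂ ∩ d₃).card = 1 →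
      (C d₁ = 0 ↔ C d₂ = C d₃) ∧ (C d₁ = 1 ↔ C d₂ ≠ C d₃)) :
    (Scenario1 C ∧ ¬ Scenario2 C ∧ ¬ Scenario3 C) ∨
    (¬ Scenario1 C ∧ Scenario2 C ∧ ¬ Scenario3 C) ∨
    (¬ Scenario1 C ∧ ¬ Scenario2 C ∧ Scenario3 C) := by
  obtain ⟨v1, q1⟩ : ∃ v, C {1,2} = v := ⟨_, rfl⟩
  obtain ⟨v2, q2⟩ : ∃ v, C {1,3} = v := ⟨_, rfl⟩
  obtain ⟨v3, q3⟩ : ∃ v, C {1,4} = v := ⟨_, rfl⟩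
  obtain ⟨v4, q4⟩ : ∃ v, C {2,3} = v := ⟨_, rfl⟩
  obtain ⟨v5, q5⟩ : ∃ v, C {2,4} = v := ⟨_, rfl⟩
  obtain ⟨v6, q6⟩ : ∃ v, C {3,4} = v := ⟨_, rfl⟩
  have hr1 := hrange {1,2} s12 c12
  have hr2 := hrange {1,3} s13 c13
  have hr3 := hrange {1,4} s14 c14
  have hr4 := hrange {2,3} s23 c23
  have hr5 := hrange {2,4} s24 c24
  have hr6 := hrange {3,4} s34 c34
  have hv1 := (hlaw {1,2} s12 {1,3} s13 {1,4} s14 c12 c13 c14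
    (by decide) (by decide) (by decide) (by decide)).1
  have hv2 := (hlaw {1,2} s12 {2,3} s23 {2,4} s24 c12 c23 c24
    (by decide) (by decide) (by decide) (by decide)).1
  have hv3 := (hlaw {1,3} s13 {2,3} s23 {3,4} s34 c13 c23 c34
    (by decide) (by decide) (by decide) (by decide)).1
  have hv4 := (hlaw {1,4} s14 {2,4} s24 {3,4} s34 c14 c24 c34
    (by decide) (by decide) (by decide) (by decide)).1
  simp only [q1, q2, q3, q4, q5, q6] at hr1 hr2 hr3 hr4 hr5 hr6 hv1 hv2 hv3 hv4
  have hS1 : Scenario1 C ↔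
      (v1 = 0 ∧ v2 = 0 ∧ v3 = 0 ∧ v4 = 0 ∧ v5 = 0 ∧ v6 = 0) := by
    constructor
    · intro h
      have m1 := h _ s12 c12; have m2 := h _ s13 c13; have m3 := h _ s14 c14
      have m4 := h _ s23 c23; have m5 := h _ s24 c24; have m6 := h _ s34 c34
      simp only [q1, q2, q3, q4, q5, q6] at m1 m2 m3 m4 m5 m6
      exact ⟨m1, m2, m3, m4, m5, m6⟩
    · rintro ⟨w1,w2,w3,w4,w5,w6⟩ d hd hc
      rcases mem_pairs hd hc with rfl|rfl|rfl|rfl|rfl|rfl <;>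
        simp only [q1, q2, q3, q4, q5, q6] <;> assumption
  have hS2 : Scenario2 C ↔
      ((v1 = 0 ∧ v2 = 0 ∧ v3 = 0 ∧ v4 = 1 ∧ v5 = 1 ∧ v6 = 1) ∨
       (v1 = 0 ∧ v2 = 1 ∧ v3 = 1 ∧ v4 = 0 ∧ v5 = 0 ∧ v6 = 1) ∨
       (v1 = 1 ∧ v2 = 0 ∧ v3 = 1 ∧ v4 = 0 ∧ v5 = 1 ∧ v6 = 0) ∨
       (v1 = 1 ∧ v2 = 1 ∧ v3 = 0 ∧ v4 = 1 ∧ v5 = 0 ∧ v6 = 0)) := by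
    constructor
    · rintro ⟨x, hx, h⟩
      have e1 := h {1,2} s12 c12
      have e2 := h {1,3} s13 c13
      have e3 := h {1,4} s14 c14
      have e4 := h {2,3} s23 c23
      have e5 := h {2,4} s24 c24
      have e6 := h {3,4} s34 c34
      simp only [q1, q2, q3, q4, q5, q6] at e1 e2 e3 e4 e5 e6
      have hx' : x = 1 ∨ x = 2 ∨ x = 3 ∨ x = 4 := by simpa using hx
      clear hx h
      rcases hx' with rfl|rfl|rfl|rfl <;>
        (first
          | have r1 := e1.2 (by decide)
          | have r1 : v1 = 1 := hr1.resolve_left (fun hz => absurd (e1.1 hz) (by decide))) <;>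
        (first
          | have r2 := e2.2 (by decide)
          | have r2 : v2 = 1 := hr2.resolve_left (fun hz => absurd (e2.1 hz) (by decide))) <;>
        (first
          | have r3 := e3.2 (by decide)
          | have r3 : v3 = 1 := hr3.resolve_left (fun hz => absurd (e3.1 hz) (by decide))) <;>
        (first
          | have r4 := e4.2 (by decide)
          | have r4 : v4 = 1 := hr4.resolve_left (fun hz => absurd (e4.1 hz) (by decide))) <;>
        (first
          | have r5 := e5.2 (by decide)
          | have r5 : v5 = 1 := hr5.resolve_left (fun hz => absurd (e5.1 hz) (by decide))) <;>
        (first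
          | have r6 := e6.2 (by decide)
          | have r6 : v6 = 1 := hr6.resolve_left (fun hz => absurd (e6.1 hz) (by decide))) <;>
        simp [r1, r2, r3, r4, r5, r6]
    · rintro (⟨w1,w2,w3,w4,w5,w6⟩|⟨w1,w2,w3,w4,w5,w6⟩|⟨w1,w2,w3,w4,w5,w6⟩|⟨w1,w2,w3,w4,w5,w6⟩)
      · exact ⟨1, by decide, fun d hd hc => by
          rcases mem_pairs hd hc with rfl|rfl|rfl|rfl|rfl|rfl <;>
            simp only [q1,q2,q3,q4,q5,q6,w1,w2,w3,w4,w5,w6] <;> decide⟩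
      · exact ⟨2, by decide, fun d hd hc => by
          rcases mem_pairs hd hc with rfl|rfl|rfl|rfl|rfl|rfl <;>
            simp only [q1,q2,q3,q4,q5,q6,w1,w2,w3,w4,w5,w6] <;> decide⟩
      · exact ⟨3, by decide, fun d hd hc => by
          rcases mem_pairs hd hc with rfl|rfl|rfl|rfl|rfl|rfl <;>
            simp only [q1,q2,q3,q4,q5,q6,w1,w2,w3,w4,w5,w6] <;> decide⟩
      · exact ⟨4, by decide, fun d hd hc => by
          rcases mem_pairs hd hc with rfl|rfl|rfl|rfl|rfl|rfl <;>
            simp only [q1,q2,q3,q4,q5,q6,w1,w2,w3,w4,w5,w6] <;> decide⟩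
  have hS3 : Scenario3 C ↔
      ((v1 = 0 ∧ v2 = 1 ∧ v3 = 1 ∧ v4 = 1 ∧ v5 = 1 ∧ v6 = 0) ∨
       (v1 = 1 ∧ v2 = 0 ∧ v3 = 1 ∧ v4 = 1 ∧ v5 = 0 ∧ v6 = 1) ∨
       (v1 = 1 ∧ v2 = 1 ∧ v3 = 0 ∧ v4 = 0 ∧ v5 = 1 ∧ v6 = 1)) := by
    constructor
    · rintro ⟨d₀, hsub, hcard, h⟩
      have e1 := h {1,2} s12 c12
      have e2 := h {1,3} s13 c13
      have e3 := h {1,4} s14 c14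
      have e4 := h {2,3} s23 c23
      have e5 := h {2,4} s24 c24
      have e6 := h {3,4} s34 c34
      simp only [q1, q2, q3, q4, q5, q6] at e1 e2 e3 e4 e5 e6
      clear h
      rcases mem_pairs hsub hcard with rfl|rfl|rfl|rfl|rfl|rfl <;>
        simp only [sd12, sd13, sd14, sd23, sd24, sd34] at e1 e2 e3 e4 e5 e6 <;>
        (first
          | have r1 := e1.2 (by decide)
          | have r1 : v1 = 1 := hr1.resolve_left (fun hz => absurd (e1.1 hz) (by decide))) <;>
        (first
          | have r2 := e2.2 (by decide)
          | have r2 : v2 = 1 := hr2.resolve_left (fun hz => absurd (e2.1 hz) (by decide))) <;>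
        (first
          | have r3 := e3.2 (by decide)
          | have r3 : v3 = 1 := hr3.resolve_left (fun hz => absurd (e3.1 hz) (by decide))) <;>
        (first
          | have r4 := e4.2 (by decide)
          | have r4 : v4 = 1 := hr4.resolve_left (fun hz => absurd (e4.1 hz) (by decide))) <;>
        (first
          | have r5 := e5.2 (by decide)
          | have r5 : v5 = 1 := hr5.resolve_left (fun hz => absurd (e5.1 hz) (by decide))) <;>
        (first
          | have r6 := e6.2 (by decide)
          | have r6 : v6 = 1 := hr6.resolve_left (fun hz => absurd (e6.1 hz) (by decide))) <;>
        simp [r1, r2, r3, r4, r5, r6]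
    · rintro (⟨w1,w2,w3,w4,w5,w6⟩|⟨w1,w2,w3,w4,w5,w6⟩|⟨w1,w2,w3,w4,w5,w6⟩)
      · exact ⟨{1,2}, s12, c12, fun d hd hc => by
          rcases mem_pairs hd hc with rfl|rfl|rfl|rfl|rfl|rfl <;>
            simp only [q1,q2,q3,q4,q5,q6,w1,w2,w3,w4,w5,w6,sd12] <;> decide⟩
      · exact ⟨{1,3}, s13, c13, fun d hd hc => by
          rcases mem_pairs hd hc with rfl|rfl|rfl|rfl|rfl|rfl <;>
            simp only [q1,q2,q3,q4,q5,q6,w1,w2,w3,w4,w5,w6,sd13] <;> decide⟩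
      · exact ⟨{1,4}, s14, c14, fun d hd hc => by
          rcases mem_pairs hd hc with rfl|rfl|rfl|rfl|rfl|rfl <;>
            simp only [q1,q2,q3,q4,q5,q6,w1,w2,w3,w4,w5,w6,sd14] <;> decide⟩
  have key :
      ((v1 = 0 ∧ v2 = 0 ∧ v3 = 0 ∧ v4 = 0 ∧ v5 = 0 ∧ v6 = 0) ∨
       (v1 = 0 ∧ v2 = 0 ∧ v3 = 0 ∧ v4 = 1 ∧ v5 = 1 ∧ v6 = 1) ∨
       (v1 = 0 ∧ v2 = 1 ∧ v3 = 1 ∧ v4 = 0 ∧ v5 = 0 ∧ v6 = 1) ∨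
       (v1 = 1 ∧ v2 = 0 ∧ v3 = 1 ∧ v4 = 0 ∧ v5 = 1 ∧ v6 = 0) ∨
       (v1 = 1 ∧ v2 = 1 ∧ v3 = 0 ∧ v4 = 1 ∧ v5 = 0 ∧ v6 = 0) ∨
       (v1 = 0 ∧ v2 = 1 ∧ v3 = 1 ∧ v4 = 1 ∧ v5 = 1 ∧ v6 = 0) ∨
       (v1 = 1 ∧ v2 = 0 ∧ v3 = 1 ∧ v4 = 1 ∧ v5 = 0 ∧ v6 = 1) ∨
       (v1 = 1 ∧ v2 = 1 ∧ v3 = 0 ∧ v4 = 0 ∧ v5 = 1 ∧ v6 = 1)) := by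
    clear hS1 hS2 hS3 q1 q2 q3 q4 q5 q6 hrange hlaw
    rcases hr1 with rfl|rfl <;> rcases hr2 with rfl|rfl <;> rcases hr3 with rfl|rfl <;>
      rcases hr4 with rfl|rfl <;> rcases hr5 with rfl|rfl <;> rcases hr6 with rfl|rfl <;>
      simp_all
  clear hr1 hr2 hr3 hr4 hr5 hr6 hv1 hv2 hv3 hv4 q1 q2 q3 q4 q5 q6
  rcases key with ⟨rfl,rfl,rfl,rfl,rfl,rfl⟩|⟨rfl,rfl,rfl,rfl,rfl,rfl⟩|⟨rfl,rfl,rfl,rfl,rfl,rfl⟩|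
    ⟨rfl,rfl,rfl,rfl,rfl,rfl⟩|⟨rfl,rfl,rfl,rfl,rfl,rfl⟩|⟨rfl,rfl,rfl,rfl,rfl,rfl⟩|
    ⟨rfl,rfl,rfl,rfl,rfl,rfl⟩|⟨rfl,rfl,rfl,rfl,rfl,rfl⟩
  · exact Or.inl ⟨hS1.2 (by norm_num), fun h => by have := hS2.1 h; norm_num at this,
      fun h => by have := hS3.1 h; norm_num at this⟩
  · exact Or.inr (Or.inl ⟨fun h => by have := hS1.1 h; norm_num at this,
      hS2.2 (by norm_num), fun h => by have := hS3.1 h; norm_num at this⟩)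
  · exact Or.inr (Or.inl ⟨fun h => by have := hS1.1 h; norm_num at this,
      hS2.2 (by norm_num), fun h => by have := hS3.1 h; norm_num at this⟩)
  · exact Or.inr (Or.inl ⟨fun h => by have := hS1.1 h; norm_num at this,
      hS2.2 (by norm_num), fun h => by have := hS3.1 h; norm_num at this⟩)
  · exact Or.inr (Or.inl ⟨fun h => by have := hS1.1 h; norm_num at this,
      hS2.2 (by norm_num), fun h => by have := hS3.1 h; norm_num at this⟩)
  · exact Or.inr (Or.inr ⟨fun h => by have := hS1.1 h; norm_num at this,
      fun h => by have := hS2.1 h; norm_num at this, hS3.2 (by norm_num)⟩)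
  · exact Or.inr (Or.inr ⟨fun h => by have := hS1.1 h; norm_num at this,
      fun h => by have := hS2.1 h; norm_num at this, hS3.2 (by norm_num)⟩)
  · exact Or.inr (Or.inr ⟨fun h => by have := hS1.1 h; norm_num at this,
      fun h => by have := hS2.1 h; norm_num at this, hS3.2 (by norm_num)⟩)
end

section
/- For every n ≥ 4, every sub div point set of n−1 points of Conv_n is isomorphic to Conv_{n−1}. -/
open Finset

section Auxiliary

/-! ### Auxiliary definitions and lemmas -/

/-- The "middle" div of the dividon of `Conv_n` with divider `d`. -/
def MidS (n : ℕ) (d : Finset ℕ) : Finset ℕ :=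
  (Finset.Icc 1 n).filter fun p => (∃ i ∈ d, i < p) ∧ ∃ j ∈ d, p < j

/-- The "outer" div of the dividon of `Conv_n` with divider `d`. -/
def OutS (n : ℕ) (d : Finset ℕ) : Finset ℕ :=
  (Finset.Icc 1 n).filter fun p => (∀ i ∈ d, p < i) ∨ ∀ i ∈ d, i < p

lemma convN_snd (k : ℕ) : (ConvN k).2 =
    ((Finset.Icc 1 k).powersetCard 2).image
      (fun d => (d, ({MidS k d, OutS k d} : Finset (Finset ℕ)))) := rfl

lemma mem_MidS {n i j p : ℕ} (hij : i < j) :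
    p ∈ MidS n {i, j} ↔ p ∈ Finset.Icc 1 n ∧ i < p ∧ p < j := by
  simp only [MidS, mem_filter, mem_insert, mem_singleton, exists_eq_or_imp, exists_eq_left,
    and_congr_right_iff]
  intro _
  omega

lemma mem_OutS {n i j p : ℕ} (hij : i < j) :
    p ∈ OutS n {i, j} ↔ p ∈ Finset.Icc 1 n ∧ (p < i ∨ j < p) := by
  simp only [OutS, mem_filter, mem_insert, mem_singleton, forall_eq_or_imp, forall_eq,
    and_congr_right_iff]
  intro _
  omega

lemma pair_of_card_two {d : Finset ℕ} (h : d.card = 2) : ∃ i j, i < j ∧ d = {i, j} := by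
  obtain ⟨x, y, hxy, rfl⟩ := Finset.card_eq_two.1 h
  rcases lt_or_gt_of_ne hxy with h' | h'
  · exact ⟨x, y, h', rfl⟩
  · exact ⟨y, x, h', by rw [Finset.pair_comm]⟩

/-- The squeezing map that removes the point `m`. -/
def sqz (m p : ℕ) : ℕ := if p < m then p else p - 1

lemma sq_mem {n m p : ℕ} (h1 : 1 ≤ p) (h2 : p ≤ n) (h3 : p ≠ m) (hm1 : 1 ≤ m) (hm2 : m ≤ n) :
    1 ≤ sqz m p ∧ sqz m p ≤ n - 1 := by unfold sqz; split_ifs <;> omega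

lemma sq_lt {m p q : ℕ} (hp : p ≠ m) (hq : q ≠ m) : p < q ↔ sqz m p < sqz m q := by
  unfold sqz; split_ifs <;> omega

lemma sq_surj {n m q : ℕ} (hm1 : 1 ≤ m) (hm2 : m ≤ n) (h1 : 1 ≤ q) (h2 : q ≤ n - 1) :
    ∃ p, 1 ≤ p ∧ p ≤ n ∧ p ≠ m ∧ sqz m p = q := by
  refine ⟨if q < m then q else q + 1, ?_⟩
  unfold sqz; split_ifs <;> omega

lemma mem_Fudps {X : PreDPS} {E : Dividon} :
    E ∈ (Fudps X).2 ↔ ∃ D ∈ X.2, ∃ T ∈ (X.1 \ D.1).powersetCard 2,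
      (D.1, if ∃ dv ∈ D.2, T ⊆ dv then ({T, ∅} : Finset (Finset ℕ))
            else T.image fun a => ({a} : Finset ℕ)) = E := by
  simp only [Fudps, Finset.mem_biUnion, Finset.mem_image]

/-- Two 2-part partitions (as unordered pairs) of the same set with the
same "same part" relation are equal. -/
lemma pair_partition {A B M O : Finset ℕ}
    (hU : A ∪ B = M ∪ O)
    (hAB : ∀ q, ¬(q ∈ A ∧ q ∈ B)) (hMO : ∀ q, ¬(q ∈ M ∧ q ∈ O))
    (hsame : ∀ x ∈ A ∪ B, ∀ y ∈ A ∪ B,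
      (((x ∈ A ∧ y ∈ A) ∨ (x ∈ B ∧ y ∈ B)) ↔ (x ∈ M ↔ y ∈ M))) :
    ({A, B} : Finset (Finset ℕ)) = {M, O} := by
  have hMsub : M ⊆ A ∪ B := by rw [hU]; exact subset_union_left
  have hOsub : O ⊆ A ∪ B := by rw [hU]; exact subset_union_right
  have hOM : ∀ x ∈ A ∪ B, (x ∈ O ↔ x ∉ M) := by
    intro x hx
    constructor
    · intro hxO hxM; exact hMO x ⟨hxM, hxO⟩
    · intro hxM
      have hx' : x ∈ M ∪ O := hU ▸ hx
      rcases mem_union.1 hx' with h | h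
      · exact absurd h hxM
      · exact h
  rcases A.eq_empty_or_nonempty with rfl | ⟨a₀, ha₀⟩
  · have hB : B = M ∪ O := by rwa [empty_union] at hU
    rcases M.eq_empty_or_nonempty with rfl | ⟨x₀, hx₀⟩
    · rw [hB, empty_union]
    · have hx₀B : x₀ ∈ B := by rw [hB]; exact mem_union_left _ hx₀
      have hBM : ∀ y ∈ B, y ∈ M := by
        intro y hy
        exact ((hsame x₀ (mem_union_right _ hx₀B) y (mem_union_right _ hy)).1
          (Or.inr ⟨hx₀B, hy⟩)).1 hx₀
      have hMB : M = B := by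
        apply Subset.antisymm
        · intro q hq
          have := hMsub hq; rwa [empty_union] at this
        · exact hBM
      have hO : O = ∅ := by
        rw [eq_empty_iff_forall_notMem]
        intro q hq
        have hqB : q ∈ B := by have := hOsub hq; rwa [empty_union] at this
        exact hMO q ⟨hBM q hqB, hq⟩
      rw [hMB, hO]
      exact Finset.pair_comm ∅ B
  rcases B.eq_empty_or_nonempty with rfl | ⟨b₀, hb₀⟩
  · have hA : A = M ∪ O := by rwa [union_empty] at hU
    rcases M.eq_empty_or_nonempty with rfl | ⟨x₀, hx₀⟩
    · rw [hA, empty_union]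
      exact Finset.pair_comm O ∅
    · have hx₀A : x₀ ∈ A := by rw [hA]; exact mem_union_left _ hx₀
      have hAM : ∀ y ∈ A, y ∈ M := by
        intro y hy
        exact ((hsame x₀ (mem_union_left _ hx₀A) y (mem_union_left _ hy)).1
          (Or.inl ⟨hx₀A, hy⟩)).1 hx₀
      have hMA : M = A := by
        apply Subset.antisymm
        · intro q hq
          have := hMsub hq; rwa [union_empty] at this
        · exact hAM
      have hO : O = ∅ := by
        rw [eq_empty_iff_forall_notMem]
        intro q hq
        have hqA : q ∈ A := by have := hOsub hq; rwa [union_empty] at this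
        exact hMO q ⟨hAM q hqA, hq⟩
      rw [hMA, hO]
  · have ha₀' : a₀ ∈ A ∪ B := mem_union_left _ ha₀
    have hb₀' : b₀ ∈ A ∪ B := mem_union_right _ hb₀
    have hnot : ¬(a₀ ∈ M ↔ b₀ ∈ M) := by
      intro hiff
      rcases (hsame a₀ ha₀' b₀ hb₀').2 hiff with ⟨_, h⟩ | ⟨h, _⟩
      · exact hAB b₀ ⟨h, hb₀⟩
      · exact hAB a₀ ⟨ha₀, h⟩
    by_cases ha₀M : a₀ ∈ M
    · have hAM : ∀ a ∈ A, a ∈ M := fun a ha =>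
        ((hsame a (mem_union_left _ ha) a₀ ha₀').1 (Or.inl ⟨ha, ha₀⟩)).2 ha₀M
      have hBO : ∀ b ∈ B, b ∉ M := by
        intro b hb hbM
        rcases (hsame b (mem_union_right _ hb) a₀ ha₀').2 (iff_of_true hbM ha₀M) with
          ⟨hbA, _⟩ | ⟨_, ha₀B⟩
        · exact hAB b ⟨hbA, hb⟩
        · exact hAB a₀ ⟨ha₀, ha₀B⟩
      have hMA : M = A := by
        apply Subset.antisymm
        · intro q hq
          rcases mem_union.1 (hMsub hq) with h | h
          · exact h
          · exact absurd hq (hBO q h)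
        · exact hAM
      have hOB : O = B := by
        apply Subset.antisymm
        · intro q hq
          rcases mem_union.1 (hOsub hq) with h | h
          · exact absurd hq (fun hq' => hMO q ⟨hAM q h, hq'⟩)
          · exact h
        · intro b hb
          exact (hOM b (mem_union_right _ hb)).2 (hBO b hb)
      rw [hMA, hOB]
    · have hb₀M : b₀ ∈ M := by
        by_contra hbM
        exact hnot (iff_of_false ha₀M hbM)
      have hBM : ∀ b ∈ B, b ∈ M := fun b hb =>
        ((hsame b (mem_union_right _ hb) b₀ hb₀').1 (Or.inr ⟨hb, hb₀⟩)).2 hb₀M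
      have hAO : ∀ a ∈ A, a ∉ M := by
        intro a ha haM
        rcases (hsame a (mem_union_left _ ha) b₀ hb₀').2 (iff_of_true haM hb₀M) with
          ⟨_, hb₀A⟩ | ⟨haB, _⟩
        · exact hAB b₀ ⟨hb₀A, hb₀⟩
        · exact hAB a ⟨ha, haB⟩
      have hMB : M = B := by
        apply Subset.antisymm
        · intro q hq
          rcases mem_union.1 (hMsub hq) with h | h
          · exact absurd hq (hAO q h)
          · exact h
        · exact hBM
      have hOA : O = A := by
        apply Subset.antisymm
        · intro q hq
          rcases mem_union.1 (hOsub hq) with h | h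
          · exact h
          · exact absurd hq (fun hq' => hMO q ⟨hBM q h, hq'⟩)
        · intro a ha
          exact (hOM a (mem_union_left _ ha)).2 (hAO a ha)
      rw [hMB, hOA]
      exact Finset.pair_comm A B

lemma conv_same {n i j a b : ℕ} (hij : i < j)
    (ha : a ∈ Finset.Icc 1 n) (hb : b ∈ Finset.Icc 1 n)
    (hai : a ≠ i) (haj : a ≠ j) (hbi : b ≠ i) (hbj : b ≠ j) :
    (∃ dv ∈ ({MidS n {i, j}, OutS n {i, j}} : Finset (Finset ℕ)), ({a, b} : Finset ℕ) ⊆ dv)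
      ↔ ((i < a ∧ a < j) ↔ (i < b ∧ b < j)) := by
  constructor
  · rintro ⟨dv, hdv, hsubv⟩
    have ha' := hsubv (mem_insert_self a {b})
    have hb' := hsubv (mem_insert_of_mem (mem_singleton_self b))
    rcases mem_insert.1 hdv with rfl | hdv
    · rw [mem_MidS hij] at ha' hb'
      have h1 := ha'.2
      have h2 := hb'.2
      omega
    · rw [mem_singleton] at hdv; subst hdv
      rw [mem_OutS hij] at ha' hb'
      have h1 := ha'.2
      have h2 := hb'.2
      omega
  · intro hsame
    by_cases hcase : i < a ∧ a < j
    · refine ⟨MidS n {i, j}, mem_insert_self _ _, ?_⟩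
      intro x hx
      rcases mem_insert.1 hx with rfl | hx
      · exact (mem_MidS hij).2 ⟨ha, hcase⟩
      · rw [mem_singleton] at hx; subst hx
        exact (mem_MidS hij).2 ⟨hb, hsame.1 hcase⟩
    · refine ⟨OutS n {i, j}, mem_insert_of_mem (mem_singleton_self _), ?_⟩
      intro x hx
      rcases mem_insert.1 hx with rfl | hx
      · refine (mem_OutS hij).2 ⟨ha, ?_⟩
        have h1 := mem_Icc.1 ha
        omega
      · rw [mem_singleton] at hx; subst hx
        refine (mem_OutS hij).2 ⟨hb, ?_⟩
        have h1 := mem_Icc.1 hb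
        have h2 : ¬(i < x ∧ x < j) := fun h => hcase (hsame.2 h)
        omega

/-- Decoding a unit dividon of `F_udps (Conv_n)`. -/
lemma conv_unit {n : ℕ} {E : Dividon} (hE : E ∈ (Fudps (ConvN n)).2) :
    ∃ d T, E.1 = d ∧ d ⊆ Finset.Icc 1 n ∧ d.card = 2 ∧
      T ⊆ Finset.Icc 1 n \ d ∧ T.card = 2 ∧
      ((∃ dv ∈ ({MidS n d, OutS n d} : Finset (Finset ℕ)), T ⊆ dv) ∧ E.2 = {T, ∅}
       ∨ (¬∃ dv ∈ ({MidS n d, OutS n d} : Finset (Finset ℕ)), T ⊆ dv) ∧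
          E.2 = T.image fun a => ({a} : Finset ℕ)) := by
  obtain ⟨D, hD, T, hT, hEq⟩ := mem_Fudps.1 hE
  rw [convN_snd] at hD
  obtain ⟨d, hd, hDeq⟩ := Finset.mem_image.1 hD
  rw [mem_powersetCard] at hd hT
  have hD1 : D.1 = d := by rw [← hDeq]
  have hD2 : D.2 = ({MidS n d, OutS n d} : Finset (Finset ℕ)) := by rw [← hDeq]
  have hE1 : E.1 = d := by rw [← hEq]; exact hD1
  have hTs : T ⊆ Finset.Icc 1 n \ d := by rw [← hD1]; exact hT.1
  refine ⟨d, T, hE1, hd.1, hd.2, hTs, hT.2, ?_⟩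
  by_cases hc : ∃ dv ∈ D.2, T ⊆ dv
  · left
    have hE2 : E.2 = ({T, ∅} : Finset (Finset ℕ)) := by
      rw [← hEq]; exact if_pos hc
    rw [← hD2]
    exact ⟨hc, hE2⟩
  · right
    have hE2 : E.2 = T.image fun a => ({a} : Finset ℕ) := by
      rw [← hEq]; exact if_neg hc
    rw [← hD2]
    exact ⟨hc, hE2⟩

end Auxiliary

/-- For every `n ≥ 4`, every sub div point set of `n-1` points of Conv_n is
isomorphic to Conv_{n-1}. -/
theorem stmt_10 (n : ℕ) (hn : 4 ≤ n) (Ps : Finset ℕ) (hPs : Ps.card = n - 1)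
    (Y : PreDPS) (hY : IsSdps (ConvN n) Ps Y) :
    Isom Y (ConvN (n - 1)) := by
  obtain ⟨hsub, hc4, hDPS, hY1, hF⟩ := hY
  replace hsub : Ps ⊆ Finset.Icc 1 n := hsub
  have hn5 : 5 ≤ n := by rw [hPs] at hc4; omega
  have hcardm : (Finset.Icc 1 n \ Ps).card = 1 := by
    rw [card_sdiff_of_subset hsub, Nat.card_Icc, hPs]; omega
  obtain ⟨m, hm⟩ := Finset.card_eq_one.1 hcardm
  have hmdiff : m ∈ Finset.Icc 1 n \ Ps := by rw [hm]; exact mem_singleton_self m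
  have hmIcc := (mem_sdiff.1 hmdiff).1
  have hm1 : 1 ≤ m := (mem_Icc.1 hmIcc).1
  have hm2 : m ≤ n := (mem_Icc.1 hmIcc).2
  have hPmem : ∀ p, p ∈ Ps ↔ 1 ≤ p ∧ p ≤ n ∧ p ≠ m := by
    intro p
    constructor
    · intro hp
      have h1 := mem_Icc.1 (hsub hp)
      refine ⟨h1.1, h1.2, ?_⟩
      rintro rfl
      exact (mem_sdiff.1 hmdiff).2 hp
    · rintro ⟨h1, h2, h3⟩
      by_contra hp
      have hmem : p ∈ Finset.Icc 1 n \ Ps := mem_sdiff.2 ⟨mem_Icc.2 ⟨h1, h2⟩, hp⟩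
      rw [hm, mem_singleton] at hmem
      exact h3 hmem
  have hFsub : ∀ E, E ∈ (Fudps Y).2 → E ∈ (Fudps (ConvN n)).2 := by
    intro E hE
    rw [hF] at hE
    exact (mem_filter.1 hE).1
  have hdiv := hDPS.2.2.1
  -- Step B: the "same div" relation of Y agrees with betweenness
  have stepB : ∀ D ∈ Y.2, ∀ i j, i < j → D.1 = {i, j} →
      ∀ a b, a ∈ Ps → b ∈ Ps → a ∉ D.1 → b ∉ D.1 → a ≠ b →
      ((∃ dv ∈ D.2, ({a, b} : Finset ℕ) ⊆ dv) ↔ ((i < a ∧ a < j) ↔ (i < b ∧ b < j))) := by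
    intro D hD i j hij hd1 a b haP hbP had hbd hab
    have haIcc : a ∈ Finset.Icc 1 n := hsub haP
    have hbIcc : b ∈ Finset.Icc 1 n := hsub hbP
    have hai : a ≠ i := fun h => had (by rw [hd1, h]; exact mem_insert_self _ _)
    have haj : a ≠ j := fun h =>
      had (by rw [hd1, h]; exact mem_insert_of_mem (mem_singleton_self _))
    have hbi : b ≠ i := fun h => hbd (by rw [hd1, h]; exact mem_insert_self _ _)
    have hbj : b ≠ j := fun h =>
      hbd (by rw [hd1, h]; exact mem_insert_of_mem (mem_singleton_self _))
    have hT : ({a, b} : Finset ℕ) ∈ (Y.1 \ D.1).powersetCard 2 := by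
      rw [mem_powersetCard]
      refine ⟨?_, card_pair hab⟩
      intro x hx
      rw [mem_sdiff, hY1]
      rcases mem_insert.1 hx with rfl | hx
      · exact ⟨haP, had⟩
      · rw [mem_singleton] at hx; subst hx
        exact ⟨hbP, hbd⟩
    by_cases h : ∃ dv ∈ D.2, ({a, b} : Finset ℕ) ⊆ dv
    · simp only [h, true_iff]
      have hE : ((D.1, ({({a, b} : Finset ℕ), ∅} : Finset (Finset ℕ))) : Dividon)
          ∈ (Fudps Y).2 := by
        apply mem_Fudps.2
        exact ⟨D, hD, {a, b}, hT, by rw [if_pos h]⟩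
      obtain ⟨d, T, hE1, hdsub, hdcard, hTsub, hTcard, hcase⟩ := conv_unit (hFsub _ hE)
      have hd : d = ({i, j} : Finset ℕ) := by rw [← hE1]; exact hd1
      subst hd
      rcases hcase with ⟨hex, hE2⟩ | ⟨hnex, hE2⟩
      · have hE2' : ({({a, b} : Finset ℕ), ∅} : Finset (Finset ℕ)) =
            ({T, ∅} : Finset (Finset ℕ)) := hE2
        have hTeq : T = ({a, b} : Finset ℕ) := by
          have hTin : T ∈ ({T, ∅} : Finset (Finset ℕ)) := mem_insert_self _ _
          rw [← hE2'] at hTin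
          rcases mem_insert.1 hTin with h' | h'
          · exact h'
          · rw [mem_singleton] at h'
            exfalso; rw [h'] at hTcard; simp at hTcard
        subst hTeq
        exact (conv_same hij haIcc hbIcc hai haj hbi hbj).1 hex
      · exfalso
        have hE2' : ({({a, b} : Finset ℕ), ∅} : Finset (Finset ℕ)) =
            T.image (fun a => ({a} : Finset ℕ)) := hE2
        have hin : (∅ : Finset ℕ) ∈ T.image (fun a => ({a} : Finset ℕ)) := by
          rw [← hE2']; exact mem_insert_of_mem (mem_singleton_self _)
        obtain ⟨x, _, hx⟩ := Finset.mem_image.1 hin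
        exact (singleton_ne_empty x) hx
    · simp only [h, false_iff]
      have hE : ((D.1, ({a, b} : Finset ℕ).image (fun a => ({a} : Finset ℕ))) : Dividon)
          ∈ (Fudps Y).2 := by
        apply mem_Fudps.2
        exact ⟨D, hD, {a, b}, hT, by rw [if_neg h]⟩
      obtain ⟨d, T, hE1, hdsub, hdcard, hTsub, hTcard, hcase⟩ := conv_unit (hFsub _ hE)
      have hd : d = ({i, j} : Finset ℕ) := by rw [← hE1]; exact hd1
      subst hd
      rcases hcase with ⟨hex, hE2⟩ | ⟨hnex, hE2⟩
      · exfalso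
        have hE2' : ({a, b} : Finset ℕ).image (fun a => ({a} : Finset ℕ)) =
            ({T, ∅} : Finset (Finset ℕ)) := hE2
        have hin : (∅ : Finset ℕ) ∈ ({a, b} : Finset ℕ).image (fun a => ({a} : Finset ℕ)) := by
          rw [hE2']; exact mem_insert_of_mem (mem_singleton_self _)
        obtain ⟨x, _, hx⟩ := Finset.mem_image.1 hin
        exact (singleton_ne_empty x) hx
      · have hE2' : ({a, b} : Finset ℕ).image (fun a => ({a} : Finset ℕ)) =
            T.image (fun a => ({a} : Finset ℕ)) := hE2
        have hTeq : T = ({a, b} : Finset ℕ) := by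
          apply Finset.eq_of_subset_of_card_le
          · intro x hx
            have hxin : ({x} : Finset ℕ) ∈ ({a, b} : Finset ℕ).image
                (fun a => ({a} : Finset ℕ)) := by
              rw [hE2']; exact Finset.mem_image_of_mem _ hx
            obtain ⟨y, hy, hyx⟩ := Finset.mem_image.1 hxin
            have : y = x := by
              have := Finset.singleton_injective hyx
              exact this
            rw [← this]; exact hy
          · rw [hTcard, card_pair hab]
        subst hTeq
        intro hiff
        exact hnex ((conv_same hij haIcc hbIcc hai haj hbi hbj).2 hiff)
  -- the isomorphism
  refine ⟨sqz m, ?_, ?_⟩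
  · rw [hY1]
    refine ⟨?_, ?_, ?_⟩
    · intro p hp
      have hp' : p ∈ Ps := hp
      rw [hPmem] at hp'
      have h := sq_mem hp'.1 hp'.2.1 hp'.2.2 hm1 hm2
      exact Finset.mem_coe.2 (mem_Icc.2 h)
    · intro p hp q hq hfeq
      have hp' : p ∈ Ps := hp
      have hq' : q ∈ Ps := hq
      rw [hPmem] at hp' hq'
      by_contra hne
      rcases Nat.lt_or_ge p q with h | h
      · have := (sq_lt hp'.2.2 hq'.2.2).1 h; omega
      · have h' : q < p := by omega
        have := (sq_lt hq'.2.2 hp'.2.2).1 h'; omega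
    · intro q hq
      have hq' : q ∈ Finset.Icc 1 (n - 1) := hq
      rw [mem_Icc] at hq'
      obtain ⟨p, h1, h2, h3, h4⟩ := sq_surj hm1 hm2 hq'.1 hq'.2
      exact ⟨p, Finset.mem_coe.2 ((hPmem p).2 ⟨h1, h2, h3⟩), h4⟩
  · intro D hD
    obtain ⟨hcard2, hdsubY, A, B, hABne, hD2, hABu, hABi⟩ := hdiv D hD
    rw [hY1] at hdsubY hABu
    obtain ⟨i, j, hij, hd1⟩ := pair_of_card_two hcard2
    have hiP : i ∈ Ps := hdsubY (by rw [hd1]; exact mem_insert_self _ _)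
    have hjP : j ∈ Ps := hdsubY (by rw [hd1]; exact mem_insert_of_mem (mem_singleton_self _))
    have hiP' := (hPmem i).1 hiP
    have hjP' := (hPmem j).1 hjP
    have hij' : sqz m i < sqz m j := (sq_lt hiP'.2.2 hjP'.2.2).1 hij
    have hinj : ∀ p ∈ Ps, ∀ q ∈ Ps, sqz m p = sqz m q → p = q := by
      intro p hp q hq hfeq
      have hp' := (hPmem p).1 hp
      have hq' := (hPmem q).1 hq
      by_contra hne
      rcases Nat.lt_or_ge p q with h | h
      · have := (sq_lt hp'.2.2 hq'.2.2).1 h; omega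
      · have h' : q < p := by omega
        have := (sq_lt hq'.2.2 hp'.2.2).1 h'; omega
    have htr : ∀ p ∈ Ps, p ∉ D.1 →
        (sqz m p ∈ MidS (n - 1) {sqz m i, sqz m j} ↔ (i < p ∧ p < j)) := by
      intro p hp hpd
      have hp' := (hPmem p).1 hp
      rw [mem_MidS hij', mem_Icc]
      have h1 := sq_mem hp'.1 hp'.2.1 hp'.2.2 hm1 hm2
      have h2 : i < p ↔ sqz m i < sqz m p := sq_lt hiP'.2.2 hp'.2.2
      have h3 : p < j ↔ sqz m p < sqz m j := sq_lt hp'.2.2 hjP'.2.2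
      constructor
      · rintro ⟨_, ha, hb⟩
        exact ⟨h2.2 ha, h3.2 hb⟩
      · rintro ⟨ha, hb⟩
        exact ⟨h1, h2.1 ha, h3.1 hb⟩
    rw [convN_snd]
    apply Finset.mem_image.2
    refine ⟨D.1.image (sqz m), ?_, ?_⟩
    · rw [mem_powersetCard]
      constructor
      · intro x hx
        obtain ⟨p, hp, rfl⟩ := Finset.mem_image.1 hx
        have hp' := (hPmem p).1 (hdsubY hp)
        exact mem_Icc.2 (sq_mem hp'.1 hp'.2.1 hp'.2.2 hm1 hm2)
      · rw [hd1, image_insert, image_singleton]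
        exact card_pair (by omega)
    · rw [Prod.mk.injEq]
      refine ⟨rfl, ?_⟩
      have hdimg : D.1.image (sqz m) = {sqz m i, sqz m j} := by
        rw [hd1, image_insert, image_singleton]
      rw [hdimg, hD2, image_insert, image_singleton]
      -- now: {MidS (n-1) {i',j'}, OutS (n-1) {i',j'}} = {A.image f, B.image f}
      have hU' : A.image (sqz m) ∪ B.image (sqz m) =
          MidS (n - 1) {sqz m i, sqz m j} ∪ OutS (n - 1) {sqz m i, sqz m j} := by
        ext q
        constructor
        · intro hq
          rw [← image_union] at hq
          obtain ⟨p, hp, rfl⟩ := Finset.mem_image.1 hq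
          have hpd : p ∈ Ps \ D.1 := by rw [← hABu]; exact hp
          obtain ⟨hpPs, hpD⟩ := mem_sdiff.1 hpd
          have hp' := (hPmem p).1 hpPs
          have hpi : p ≠ i := fun h => hpD (by rw [hd1, h]; exact mem_insert_self _ _)
          have hpj : p ≠ j := fun h =>
            hpD (by rw [hd1, h]; exact mem_insert_of_mem (mem_singleton_self _))
          by_cases hbet : i < p ∧ p < j
          · exact mem_union_left _ ((htr p hpPs hpD).2 hbet)
          · apply mem_union_right
            rw [mem_OutS hij']
            have hpa := sq_mem hp'.1 hp'.2.1 hp'.2.2 hm1 hm2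
            refine ⟨mem_Icc.2 hpa, ?_⟩
            have hor : p < i ∨ j < p := by omega
            rcases hor with h | h
            · exact Or.inl ((sq_lt hp'.2.2 hiP'.2.2).1 h)
            · exact Or.inr ((sq_lt hjP'.2.2 hp'.2.2).1 h)
        · intro hq
          have hqic : q ∈ Finset.Icc 1 (n - 1) ∧ q ≠ sqz m i ∧ q ≠ sqz m j := by
            rcases mem_union.1 hq with h | h
            · rw [mem_MidS hij'] at h
              obtain ⟨h1, h2⟩ := h
              exact ⟨h1, by omega, by omega⟩
            · rw [mem_OutS hij'] at h
              obtain ⟨h1, h2⟩ := h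
              exact ⟨h1, by omega, by omega⟩
          obtain ⟨hqI, hqi, hqj⟩ := hqic
          rw [mem_Icc] at hqI
          obtain ⟨p, h1, h2, h3, h4⟩ := sq_surj hm1 hm2 hqI.1 hqI.2
          have hpPs : p ∈ Ps := (hPmem p).2 ⟨h1, h2, h3⟩
          have hpD : p ∉ D.1 := by
            rw [hd1]
            intro hmem
            rcases mem_insert.1 hmem with rfl | hmem
            · exact hqi h4.symm
            · rw [mem_singleton] at hmem; subst hmem
              exact hqj h4.symm
          rw [← image_union]
          apply Finset.mem_image.2
          refine ⟨p, ?_, h4⟩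
          rw [hABu]
          exact mem_sdiff.2 ⟨hpPs, hpD⟩
      have hAB' : ∀ q, ¬(q ∈ A.image (sqz m) ∧ q ∈ B.image (sqz m)) := by
        rintro q ⟨hqa, hqb⟩
        obtain ⟨a, ha, rfl⟩ := Finset.mem_image.1 hqa
        obtain ⟨b, hb, hfeq⟩ := Finset.mem_image.1 hqb
        have haPs : a ∈ Ps := by
          have : a ∈ Ps \ D.1 := by rw [← hABu]; exact mem_union_left _ ha
          exact (mem_sdiff.1 this).1
        have hbPs : b ∈ Ps := by
          have : b ∈ Ps \ D.1 := by rw [← hABu]; exact mem_union_right _ hb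
          exact (mem_sdiff.1 this).1
        have hba : b = a := hinj b hbPs a haPs hfeq
        subst hba
        have : b ∈ A ∩ B := mem_inter.2 ⟨ha, hb⟩
        rw [hABi] at this
        exact notMem_empty _ this
      have hMO' : ∀ q, ¬(q ∈ MidS (n - 1) {sqz m i, sqz m j} ∧
          q ∈ OutS (n - 1) {sqz m i, sqz m j}) := by
        rintro q ⟨h1, h2⟩
        rw [mem_MidS hij'] at h1
        rw [mem_OutS hij'] at h2
        have := h1.2
        have := h2.2
        omega
      have hsame : ∀ x ∈ A.image (sqz m) ∪ B.image (sqz m),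
          ∀ y ∈ A.image (sqz m) ∪ B.image (sqz m),
          (((x ∈ A.image (sqz m) ∧ y ∈ A.image (sqz m)) ∨
            (x ∈ B.image (sqz m) ∧ y ∈ B.image (sqz m))) ↔
           (x ∈ MidS (n - 1) {sqz m i, sqz m j} ↔ y ∈ MidS (n - 1) {sqz m i, sqz m j})) := by
        intro x hx y hy
        rw [← image_union] at hx hy
        obtain ⟨p, hp, rfl⟩ := Finset.mem_image.1 hx
        obtain ⟨q, hq, rfl⟩ := Finset.mem_image.1 hy
        have hpd : p ∈ Ps \ D.1 := by rw [← hABu]; exact hp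
        have hqd : q ∈ Ps \ D.1 := by rw [← hABu]; exact hq
        obtain ⟨hpPs, hpD⟩ := mem_sdiff.1 hpd
        obtain ⟨hqPs, hqD⟩ := mem_sdiff.1 hqd
        have himg : ∀ C : Finset ℕ, C ⊆ A ∪ B →
            ∀ r, r ∈ Ps → (sqz m r ∈ C.image (sqz m) ↔ r ∈ C) := by
          intro C hC r hrPs
          constructor
          · intro hr
            obtain ⟨c, hc, hceq⟩ := Finset.mem_image.1 hr
            have hcPs : c ∈ Ps := by
              have : c ∈ Ps \ D.1 := by rw [← hABu]; exact hC hc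
              exact (mem_sdiff.1 this).1
            have : c = r := hinj c hcPs r hrPs hceq
            rw [← this]; exact hc
          · exact fun hr => Finset.mem_image_of_mem _ hr
        rw [himg A subset_union_left p hpPs, himg A subset_union_left q hqPs,
          himg B subset_union_right p hpPs, himg B subset_union_right q hqPs,
          htr p hpPs hpD, htr q hqPs hqD]
        by_cases hpq : p = q
        · subst hpq
          refine iff_of_true ?_ Iff.rfl
          rcases mem_union.1 hp with h | h
          · exact Or.inl ⟨h, h⟩
          · exact Or.inr ⟨h, h⟩
        · rw [← stepB D hD i j hij hd1 p q hpPs hqPs hpD hqD hpq]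
          rw [hD2]
          constructor
          · rintro (⟨h1, h2⟩ | ⟨h1, h2⟩)
            · exact ⟨A, mem_insert_self _ _,
                insert_subset_iff.2 ⟨h1, singleton_subset_iff.2 h2⟩⟩
            · exact ⟨B, mem_insert_of_mem (mem_singleton_self _),
                insert_subset_iff.2 ⟨h1, singleton_subset_iff.2 h2⟩⟩
          · rintro ⟨dv, hdv, hsub'⟩
            have hpdv := hsub' (mem_insert_self _ _)
            have hqdv := hsub' (mem_insert_of_mem (mem_singleton_self _))
            rcases mem_insert.1 hdv with rfl | hdv
            · exact Or.inl ⟨hpdv, hqdv⟩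
            · rw [mem_singleton] at hdv; subst hdv
              exact Or.inr ⟨hpdv, hqdv⟩
      exact (pair_partition hU' hAB' hMO' hsame).symm
end

section
/- Let X be a finite set with |X| = v, let a ≥ 1 be a natural number, let X_sub be a (v−a)-element subset of X, and let b be a natural number with 1 ≤ b < v−a. Then there exists a (v−a)-element set S whose members are (a+b)-element sets of (v−a)-element subsets of X, such that every s ∈ S contains X_sub as a member, and for every s ∈ S and every natural number n ≥ 1, the intersection over l ∈ s of the families of n-element subsets of l has exactly C(v−a−b, n) elements. -/
open Finset


def Tset (n b i : ℕ) : Finset ℕ := (Finset.range b).image (fun j => (i + j) % n)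

lemma L1 {n i j k : ℕ} (hi : i < n) (hj : j < n) (hk : k < n) :
    (i + j) % n = k ↔ (k + n - i) % n = j := by
  have hn : 0 < n := lt_of_le_of_lt (Nat.zero_le _) hi
  constructor
  · rintro rfl
    rw [show (i + j) % n + n - i = (i + j) % n + (n - i) by omega, Nat.mod_add_mod,
      show i + j + (n - i) = j + n by omega, Nat.add_mod_right, Nat.mod_eq_of_lt hj]
  · rintro rfl
    rw [Nat.add_mod_mod, show i + (k + n - i) = k + n by omega, Nat.add_mod_right,
      Nat.mod_eq_of_lt hk]

lemma memT {n b i k : ℕ} (hi : i < n) (hbn : b ≤ n) :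
    k ∈ Tset n b i ↔ k < n ∧ (k + n - i) % n < b := by
  have hn : 0 < n := lt_of_le_of_lt (Nat.zero_le _) hi
  constructor
  · intro hk
    simp only [Tset, mem_image, mem_range] at hk
    obtain ⟨j, hj, rfl⟩ := hk
    have hkn : (i + j) % n < n := Nat.mod_lt _ hn
    refine ⟨hkn, ?_⟩
    rw [(L1 hi (lt_of_lt_of_le hj hbn) hkn).mp rfl]; exact hj
  · rintro ⟨hkn, hd⟩
    simp only [Tset, mem_image, mem_range]
    exact ⟨(k + n - i) % n, hd, (L1 hi (Nat.mod_lt _ hn) hkn).mpr rfl⟩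

lemma T_self {n b i : ℕ} (hi : i < n) (hb : 1 ≤ b) : i ∈ Tset n b i := by
  simp only [Tset, mem_image, mem_range]
  exact ⟨0, hb, by simp [Nat.mod_eq_of_lt hi]⟩

lemma T_card {n b i : ℕ} (hi : i < n) (hbn : b ≤ n) : (Tset n b i).card = b := by
  rw [Tset, Finset.card_image_of_injOn, Finset.card_range]
  intro j1 h1 j2 h2 he
  simp only [mem_coe, mem_range] at h1 h2
  simp only at he
  have e1 := (L1 hi (lt_of_lt_of_le h1 hbn) (Nat.mod_lt (i+j2) (by omega))).mp he
  have e2 := (L1 hi (lt_of_lt_of_le h2 hbn) (Nat.mod_lt (i+j2) (by omega))).mp rfl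
  omega

lemma T_inj {n b i i' : ℕ} (hi : i < n) (hi' : i' < n) (hb : 1 ≤ b) (hbn : b < n)
    (he : Tset n b i = Tset n b i') : i = i' := by
  have hn : 0 < n := by omega
  have h1 : i ∈ Tset n b i' := he ▸ T_self hi hb
  rw [memT hi' hbn.le] at h1
  set d := (i + n - i') % n with hd
  -- k0 = i - 1
  have hk0 : (i + (n-1)) % n < n := Nat.mod_lt _ hn
  have hD : ((i + (n-1)) % n + n - i) % n = n - 1 := (L1 hi (by omega) hk0).mp rfl
  have h2 : (i + (n-1)) % n ∉ Tset n b i := by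
    rw [memT hi hbn.le]; push_neg; intro _; omega
  rw [he, memT hi' hbn.le] at h2
  push_neg at h2
  have h3 := h2 hk0
  rcases Nat.eq_zero_or_pos d with h0 | hpos
  · have := (L1 hi' (by omega) hi).mpr h0
    simpa [Nat.mod_eq_of_lt hi'] using this.symm
  · exfalso
    -- i = (i' + d) % n
    have hi_eq : (i' + d) % n = i := (L1 hi' (Nat.mod_lt _ hn) hi).mpr rfl
    have : (i + (n-1)) % n = (i' + (d-1)) % n := by
      conv_lhs => rw [← hi_eq]
      rw [Nat.mod_add_mod, show i' + d + (n-1) = i' + (d-1) + n by omega, Nat.add_mod_right]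
    have hd1 : ((i + (n-1)) % n + n - i') % n = d - 1 := by
      rw [this]
      exact (L1 hi' (by omega) (this ▸ hk0)).mp rfl
    have := h1.2
    omega

lemma T_not_all {n b k : ℕ} (hb : 1 ≤ b) (hbn : b < n)
    (h : ∀ i < n, k ∈ Tset n b i) : False := by
  have hn : 0 < n := by omega
  have hk : k < n := ((memT (i := 0) hn hbn.le).mp (h 0 hn)).1
  have hi : (k+1) % n < n := Nat.mod_lt _ hn
  have h2 := ((memT hi hbn.le).mp (h _ hi)).2
  have : ((k+1) % n + (n-1)) % n = k := by
    rw [Nat.mod_add_mod, show k + 1 + (n-1) = k + n by omega, Nat.add_mod_right,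
      Nat.mod_eq_of_lt hk]
  have := (L1 hi (by omega) hk).mp this
  omega

lemma image_getD_range (L : List ℕ) :
    (Finset.range L.length).image (fun j => L.getD j 0) = L.toFinset := by
  ext x
  simp only [mem_image, mem_range, List.mem_toFinset]
  constructor
  · rintro ⟨j, hj, rfl⟩
    rw [List.getD_eq_getElem _ _ hj]; exact List.getElem_mem hj
  · intro hx
    obtain ⟨j, hj, rfl⟩ := List.mem_iff_getElem.mp hx
    exact ⟨j, hj, List.getD_eq_getElem _ _ hj⟩


def Wf (n b : ℕ) (L : List ℕ) (i : ℕ) : Finset ℕ := (Tset n b i).image (fun j => L.getD j 0)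
def lns (n b : ℕ) (L : List ℕ) (Core : Finset ℕ) (i : ℕ) : Finset ℕ := Core ∪ Wf n b L i
def sfam (n b : ℕ) (L : List ℕ) (Core : Finset ℕ) : Finset (Finset ℕ) :=
  (Finset.range n).image (lns n b L Core)

lemma T_sub {n b i k : ℕ} (hn : 0 < n) (hk : k ∈ Tset n b i) : k < n := by
  simp only [Tset, mem_image, mem_range] at hk
  obtain ⟨j, _, rfl⟩ := hk
  exact Nat.mod_lt _ hn

lemma getD_inj {n : ℕ} {L : List ℕ} (hlen : L.length = n) (hnd : L.Nodup)
    {j1 j2 : ℕ} (h1 : j1 < n) (h2 : j2 < n) (he : L.getD j1 0 = L.getD j2 0) : j1 = j2 := by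
  rw [List.getD_eq_getElem L 0 (show j1 < L.length by omega),
    List.getD_eq_getElem L 0 (show j2 < L.length by omega)] at he
  exact (List.Nodup.getElem_inj_iff hnd).mp he

section Config
variable {n b : ℕ} {L : List ℕ} {Core : Finset ℕ}
  (hb : 1 ≤ b) (hbn : b < n) (hlen : L.length = n) (hnd : L.Nodup)
  (hdisj : Disjoint Core L.toFinset)

include hbn hlen in
lemma Wf_subset {i : ℕ} : Wf n b L i ⊆ L.toFinset := by
  intro x hx
  simp only [Wf, mem_image] at hx
  obtain ⟨j, hj, rfl⟩ := hx
  have hjn : j < L.length := hlen ▸ T_sub (by omega) hj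
  rw [List.getD_eq_getElem _ _ hjn]
  exact List.mem_toFinset.mpr (List.getElem_mem hjn)

include hbn hlen hnd in
lemma Wf_card {i : ℕ} (hi : i < n) : (Wf n b L i).card = b := by
  rw [Wf, Finset.card_image_of_injOn, T_card hi hbn.le]
  intro j1 h1 j2 h2 he
  exact getD_inj hlen hnd (T_sub (by omega) h1) (T_sub (by omega) h2) he

include hb hbn hlen hnd in
lemma Wf_inj {i i' : ℕ} (hi : i < n) (hi' : i' < n)
    (he : Wf n b L i = Wf n b L i') : i = i' := by
  apply T_inj hi hi' hb hbn
  ext k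
  constructor <;> intro hk
  · have : L.getD k 0 ∈ Wf n b L i' := he ▸ Finset.mem_image_of_mem _ hk
    simp only [Wf, mem_image] at this
    obtain ⟨k', hk', hke⟩ := this
    rwa [getD_inj hlen hnd (T_sub (by omega) hk') (T_sub (by omega) hk) hke] at hk'
  · have : L.getD k 0 ∈ Wf n b L i := he ▸ Finset.mem_image_of_mem _ hk
    simp only [Wf, mem_image] at this
    obtain ⟨k', hk', hke⟩ := this
    rwa [getD_inj hlen hnd (T_sub (by omega) hk') (T_sub (by omega) hk) hke] at hk'

include hbn hlen hnd hdisj in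
lemma lns_card {i : ℕ} (hi : i < n) : (lns n b L Core i).card = Core.card + b := by
  rw [lns, Finset.card_union_of_disjoint (hdisj.mono_right (Wf_subset hbn hlen)),
    Wf_card hbn hlen hnd hi]

include hb hbn hlen hnd hdisj in
lemma sfam_card : (sfam n b L Core).card = n := by
  rw [sfam, Finset.card_image_of_injOn, Finset.card_range]
  intro i hi i' hi' he
  simp only [mem_coe, mem_range] at hi hi'
  refine Wf_inj hb hbn hlen hnd hi hi' ?_
  have key : ∀ x ∈ Wf n b L i, x ∉ Core := fun x hx =>
    Finset.disjoint_right.mp hdisj (Wf_subset hbn hlen hx)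
  have key' : ∀ x ∈ Wf n b L i', x ∉ Core := fun x hx =>
    Finset.disjoint_right.mp hdisj (Wf_subset hbn hlen hx)
  simp only [lns] at he
  ext x
  constructor <;> intro hx
  · have : x ∈ Core ∪ Wf n b L i' := he ▸ Finset.mem_union_right _ hx
    rcases Finset.mem_union.mp this with h | h
    · exact absurd h (key x hx)
    · exact h
  · have : x ∈ Core ∪ Wf n b L i := he ▸ Finset.mem_union_right _ hx
    rcases Finset.mem_union.mp this with h | h
    · exact absurd h (key' x hx)
    · exact h

lemma Wf_zero {n b : ℕ} (hbn : b < n) (L1 L2 : List ℕ) (h1 : L1.length = b) :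
    Wf n b (L1 ++ L2) 0 = L1.toFinset := by
  have hT : Tset n b 0 = Finset.range b := by
    ext k
    simp only [Tset, mem_image, mem_range]
    constructor
    · rintro ⟨j, hj, rfl⟩
      rw [Nat.zero_add, Nat.mod_eq_of_lt (by omega)]; exact hj
    · intro hk
      exact ⟨k, hk, by rw [Nat.zero_add, Nat.mod_eq_of_lt (by omega)]⟩
  rw [Wf, hT, ← image_getD_range L1, ← h1]
  apply Finset.image_congr
  intro j hj
  simp only [mem_coe, mem_range] at hj
  show (L1 ++ L2).getD j 0 = L1.getD j 0
  rw [List.getD_eq_getElem _ _ (by simp; omega), List.getD_eq_getElem _ _ (by omega),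
    List.getElem_append_left]

include hb hbn hlen hnd in
lemma sub_iff (x : Finset ℕ) :
    (∀ l ∈ sfam n b L Core, x ⊆ l) ↔ x ⊆ Core := by
  constructor
  · intro h e he
    have hmem : ∀ i < n, e ∈ lns n b L Core i := by
      intro i hi
      exact h _ (Finset.mem_image_of_mem _ (Finset.mem_range.mpr hi)) he
    by_contra heC
    have hW : ∀ i < n, e ∈ Wf n b L i := by
      intro i hi
      rcases Finset.mem_union.mp (hmem i hi) with h' | h'
      · exact absurd h' heC
      · exact h'
    obtain ⟨k, hk0, hke⟩ := Finset.mem_image.mp (hW 0 (by omega))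
    have : ∀ i < n, k ∈ Tset n b i := by
      intro i hi
      obtain ⟨k', hk', hke'⟩ := Finset.mem_image.mp (hW i hi)
      rwa [getD_inj hlen hnd (T_sub (by omega) hk') (T_sub (by omega) hk0)
        (hke'.trans hke.symm)] at hk'
    exact T_not_all hb hbn this
  · intro h l hl
    obtain ⟨i, _, rfl⟩ := Finset.mem_image.mp hl
    exact h.trans Finset.subset_union_left

end Config

/-- The combinatorial characteristic of sub-point-sets: given a `v`-element set `X`,
`a ≥ 1`, a `(v-a)`-element subset `X_sub` of `X`, and `1 ≤ b < v-a`, there is a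
`(v-a)`-element set `S` of `(a+b)`-element sets of `(v-a)`-element subsets of `X`,
each member of `S` containing `X_sub`, such that for all `s ∈ S` and `n ≥ 1` the
intersection over `l ∈ s` of the families of `n`-element subsets of `l` has exactly
`C(v-a-b, n)` elements. -/
theorem stmt_13 (X : Finset ℕ) (v a b : ℕ) (hv : X.card = v) (ha : 1 ≤ a)
    (Xsub : Finset ℕ) (hXsubX : Xsub ⊆ X) (hXsub : Xsub.card = v - a)
    (hb : 1 ≤ b) (hbv : b < v - a) :
    ∃ S : Finset (Finset (Finset ℕ)),
      S.card = v - a ∧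
      ∀ s ∈ S, s.card = a + b ∧
        (∀ l ∈ s, l ⊆ X ∧ l.card = v - a) ∧
        Xsub ∈ s ∧
        ∀ n : ℕ, 1 ≤ n →
          Set.ncard {x : Finset ℕ | x.card = n ∧ ∀ l ∈ s, x ⊆ l} =
            Nat.choose (v - a - b) n := by
  set m := v - a with hm
  set n := a + b with hn
  have hbn : b < n := by omega
  set Y := X \ Xsub with hY
  have hYcard : Y.card = a := by
    rw [hY, card_sdiff_of_subset hXsubX, hv, hXsub]; omega
  have hYX : Y ⊆ X := sdiff_subset
  have hdisjXY : Disjoint Xsub Y := disjoint_sdiff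
  set q := Xsub.sort (· ≤ ·) with hq
  have hqlen : q.length = m := by rw [hq, Finset.length_sort, hXsub]
  have hqnd : q.Nodup := Xsub.sort_nodup _
  have hqto : q.toFinset = Xsub := Xsub.sort_toFinset _
  set B : ℕ → Finset ℕ := fun t => Wf m b q t with hB
  have hBsub : ∀ t, B t ⊆ Xsub := fun t => hqto ▸ Wf_subset hbv hqlen
  have hBcard : ∀ t < m, (B t).card = b := fun t ht => Wf_card hbv hqlen hqnd ht
  set L : ℕ → List ℕ := fun t => (B t).sort (· ≤ ·) ++ Y.sort (· ≤ ·) with hL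
  have hLlen : ∀ t < m, (L t).length = n := by
    intro t ht
    simp only [hL, List.length_append, Finset.length_sort, hBcard t ht, hYcard]; omega
  have hLnd : ∀ t, (L t).Nodup := by
    intro t
    refine List.Nodup.append (Finset.sort_nodup _ _) (Finset.sort_nodup _ _) ?_
    intro x hx hx'
    rw [Finset.mem_sort] at hx hx'
    exact (Finset.disjoint_left.mp hdisjXY) (hBsub t hx) hx'
  have hLto : ∀ t, (L t).toFinset = B t ∪ Y := by
    intro t
    simp only [hL, List.toFinset_append, Finset.sort_toFinset]
  set C : ℕ → Finset ℕ := fun t => Xsub \ B t with hC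
  have hCsub : ∀ t, C t ⊆ Xsub := fun t => sdiff_subset
  have hCcard : ∀ t < m, (C t).card = m - b := by
    intro t ht
    simp only [hC]
    rw [card_sdiff_of_subset (hBsub t), hXsub, hBcard t ht]
  have hCdisj : ∀ t, Disjoint (C t) ((L t).toFinset) := by
    intro t
    rw [hLto t, disjoint_union_right]
    exact ⟨Finset.sdiff_disjoint, hdisjXY.mono_left (hCsub t)⟩
  refine ⟨(Finset.range m).image (fun t => sfam n b (L t) (C t)), ?_, ?_⟩
  · rw [Finset.card_image_of_injOn, Finset.card_range]
    intro t ht t' ht' he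
    simp only [mem_coe, mem_range] at ht ht'
    simp only at he
    have key : ∀ x : Finset ℕ, x ⊆ C t ↔ x ⊆ C t' := by
      intro x
      rw [← sub_iff hb hbn (hLlen t ht) (hLnd t) x,
        ← sub_iff hb hbn (hLlen t' ht') (hLnd t') x, he]
    have hCe : C t = C t' :=
      Finset.Subset.antisymm ((key (C t)).mp Finset.Subset.rfl)
        ((key (C t')).mpr Finset.Subset.rfl)
    have hBe : B t = B t' := by
      have h2 : Xsub \ C t = Xsub \ C t' := by rw [hCe]
      simp only [hC] at h2
      rwa [Finset.sdiff_sdiff_eq_self (hBsub t), Finset.sdiff_sdiff_eq_self (hBsub t')] at h2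
    simp only [hB] at hBe
    exact Wf_inj hb hbv hqlen hqnd ht ht' hBe
  · intro s hs
    obtain ⟨t, htm, rfl⟩ := Finset.mem_image.mp hs
    rw [Finset.mem_range] at htm
    refine ⟨?_, ?_, ?_, ?_⟩
    · rw [sfam_card hb hbn (hLlen t htm) (hLnd t) (hCdisj t)]
    · intro l hl
      obtain ⟨i, hi, rfl⟩ := Finset.mem_image.mp hl
      rw [Finset.mem_range] at hi
      constructor
      · intro x hx
        rcases Finset.mem_union.mp hx with h | h
        · exact hXsubX (hCsub t h)
        · have := Wf_subset hbn (hLlen t htm) h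
          rw [hLto t] at this
          rcases Finset.mem_union.mp this with h' | h'
          · exact hXsubX (hBsub t h')
          · exact hYX h'
      · rw [lns_card hbn (hLlen t htm) (hLnd t) (hCdisj t) hi, hCcard t htm]
        omega
    · have h0 : lns n b (L t) (C t) 0 ∈ sfam n b (L t) (C t) :=
        Finset.mem_image_of_mem _ (Finset.mem_range.mpr (by omega))
      have heq : lns n b (L t) (C t) 0 = Xsub := by
        rw [lns]
        simp only [hL]
        rw [Wf_zero hbn ((B t).sort (· ≤ ·)) (Y.sort (· ≤ ·))
          (by rw [Finset.length_sort, hBcard t htm]), Finset.sort_toFinset]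
        simp only [hC]
        exact Finset.sdiff_union_of_subset (hBsub t)
      rwa [heq] at h0
    · intro n' hn'
      have hset : {x : Finset ℕ | x.card = n' ∧ ∀ l ∈ sfam n b (L t) (C t), x ⊆ l} =
          ↑((C t).powersetCard n') := by
        ext x
        simp only [Set.mem_setOf_eq, Finset.mem_coe, Finset.mem_powersetCard]
        rw [sub_iff hb hbn (hLlen t htm) (hLnd t) x]
        tauto
      rw [hset, Set.ncard_coe_finset, Finset.card_powersetCard, hCcard t htm]
end
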